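/- arXiv:1406.2946 — 6 statements merged into one kernel-verified Lean document; each statement's English description precedes it below -/
import Mathlib

section
/- Rains' overlap lemma: if τ ∈ PPT'(A:B) and Φ is a maximally entangled state of Schmidt rank M on H_A ⊗ H_B, then Tr(Φ τ) ≤ 1/M. -/
open scoped Matrix Kronecker
open Matrix
open scoped ComplexOrder

noncomputable section

/-- The partial transpose on the second tensor factor (w.r.t. the standard basis). -/
def partialTranspose {A B : Type*} (M : Matrix (A × B) (A × B) ℂ) :
    Matrix (A × B) (A × B) ℂ :=
  Matrix.of fun p q => M (p.1, q.2) (q.1, p.2)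

/-- The trace norm (sum of singular values) of a complex matrix. -/
def traceNorm {n : Type*} [Fintype n] [DecidableEq n] (M : Matrix n n ℂ) : ℝ :=
  ∑ i, Real.sqrt ((Matrix.isHermitian_conjTranspose_mul_self M).eigenvalues i)

/-- The Rains set PPT'(A:B) of subnormalized-after-partial-transpose positive operators. -/
def PPTprime (A B : Type*) [Fintype A] [Fintype B] [DecidableEq A] [DecidableEq B] :
    Set (Matrix (A × B) (A × B) ℂ) :=
  {τ | τ.PosSemidef ∧ traceNorm (partialTranspose τ) ≤ 1}

/-- Apply a real function to a Hermitian matrix via its spectral decomposition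
(junk value `0` on non-Hermitian input). -/
def matFun {n : Type*} [Fintype n] [DecidableEq n] (f : ℝ → ℝ) (M : Matrix n n ℂ) :
    Matrix n n ℂ :=
  if h : M.IsHermitian then
    (h.eigenvectorUnitary : Matrix n n ℂ) *
      Matrix.diagonal (fun i => (f (h.eigenvalues i) : ℂ)) *
      (h.eigenvectorUnitary : Matrix n n ℂ)ᴴ
  else 0

/-- The quantum relative entropy `D(ρ‖σ) = Tr ρ (log ρ − log σ)` (base 2). -/
def relEntropy {n : Type*} [Fintype n] [DecidableEq n] (ρ σ : Matrix n n ℂ) : ℝ :=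
  ((ρ * (matFun (Real.logb 2) ρ - matFun (Real.logb 2) σ)).trace).re

/-- `Tr{M^α}` for a Hermitian matrix, via eigenvalues (junk `0` otherwise). -/
def traceRpow {n : Type*} [Fintype n] [DecidableEq n] (M : Matrix n n ℂ) (α : ℝ) : ℝ :=
  if h : M.IsHermitian then ∑ i, (h.eigenvalues i) ^ α else 0

/-- The sandwiched Rényi relative entropy of order α (base 2). -/
def sandRenyi {n : Type*} [Fintype n] [DecidableEq n] (α : ℝ) (ρ σ : Matrix n n ℂ) : ℝ :=
  (α - 1)⁻¹ * Real.logb 2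
    (traceRpow (matFun (fun x => x ^ ((1 - α) / (2 * α))) σ * ρ *
        matFun (fun x => x ^ ((1 - α) / (2 * α))) σ) α)

/-- The extension `id_R ⊗ N` of a (linear) map on matrices to a reference system `R`. -/
def chanExt {A B R : Type*} (N : Matrix A A ℂ → Matrix B B ℂ)
    (M : Matrix (R × A) (R × A) ℂ) : Matrix (R × B) (R × B) ℂ :=
  Matrix.of fun p q => N (Matrix.of fun a a' => M (p.1, a) (q.1, a')) p.2 q.2

/-- Linearity of a map on matrices. -/
def IsLinearMatMap {A B : Type*} (N : Matrix A A ℂ → Matrix B B ℂ) : Prop :=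
  ∀ (c : ℂ) (M M' : Matrix A A ℂ), N (c • M + M') = c • N M + N M'

/-- Complete positivity: every extension by a reference system preserves positivity. -/
def IsCompletelyPositive {A B : Type*} [Fintype A] [Fintype B] (N : Matrix A A ℂ → Matrix B B ℂ) : Prop :=
  ∀ (R : Type) [Fintype R] [DecidableEq R],
    ∀ M : Matrix (R × A) (R × A) ℂ, M.PosSemidef → (chanExt N M).PosSemidef

/-- Trace preservation. -/
def IsTracePreserving {A B : Type*} [Fintype A] [Fintype B]
    (N : Matrix A A ℂ → Matrix B B ℂ) : Prop :=
  ∀ M, (N M).trace = M.trace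

/-- A quantum channel: a linear, completely positive, trace-preserving map. -/
def IsChannel {A B : Type*} [Fintype A] [Fintype B]
    (N : Matrix A A ℂ → Matrix B B ℂ) : Prop :=
  IsLinearMatMap N ∧ IsCompletelyPositive N ∧ IsTracePreserving N

/-- A density operator. -/
def IsDensity {n : Type*} [Fintype n] (ρ : Matrix n n ℂ) : Prop :=
  ρ.PosSemidef ∧ ρ.trace = 1

/-- The Rains relative entropy of a bipartite state. -/
def RainsRel {A B : Type*} [Fintype A] [Fintype B] [DecidableEq A] [DecidableEq B]
    (ρ : Matrix (A × B) (A × B) ℂ) : ℝ :=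
  ⨅ τ : (PPTprime A B), relEntropy ρ τ.1

/-- The Rains information of a channel (reference system of input dimension). -/
def RainsChan {A B : Type*} [Fintype A] [Fintype B] [DecidableEq A] [DecidableEq B]
    (N : Matrix A A ℂ → Matrix B B ℂ) : ℝ :=
  ⨆ ρ : {ρ : Matrix (A × A) (A × A) ℂ // IsDensity ρ},
    ⨅ τ : (PPTprime A B), relEntropy (chanExt N ρ.1) τ.1

/-- The sandwiched Rényi Rains information of a channel. -/
def RainsRenyiChan {A B : Type*} [Fintype A] [Fintype B] [DecidableEq A] [DecidableEq B]
    (α : ℝ) (N : Matrix A A ℂ → Matrix B B ℂ) : ℝ :=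
  ⨆ ρ : {ρ : Matrix (A × A) (A × A) ℂ // IsDensity ρ},
    ⨅ τ : (PPTprime A B), sandRenyi α (chanExt N ρ.1) τ.1

/-- The `n`-fold tensor power of a linear map on matrices. -/
def tpow {A B : Type*} [Fintype A] [DecidableEq A] (N : Matrix A A ℂ → Matrix B B ℂ)
    (n : ℕ) (M : Matrix (Fin n → A) (Fin n → A) ℂ) : Matrix (Fin n → B) (Fin n → B) ℂ :=
  Matrix.of fun f g => ∑ f' : Fin n → A, ∑ g' : Fin n → A,
    M f' g' * ∏ i, N (Matrix.single (f' i) (g' i) 1) (f i) (g i)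

end

/-- The rank-`M` maximally entangled state built from orthonormal (standard basis)
families indexed by injections `ιA`, `ιB`. -/
noncomputable def maxEnt {A B : Type*} [Fintype A] [Fintype B] [DecidableEq A] [DecidableEq B]
    (M : ℕ) (ιA : Fin M → A) (ιB : Fin M → B) : Matrix (A × B) (A × B) ℂ :=
  Matrix.of fun p q =>
    (M : ℂ)⁻¹ * (∑ i, if p = (ιA i, ιB i) then (1 : ℂ) else 0) *
      (∑ j, if q = (ιA j, ιB j) then (1 : ℂ) else 0)

lemma holder_aux {n κ : Type*} [Fintype n] [DecidableEq n] [Fintype κ]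
    (σ : Matrix n n ℂ) (r c : κ → n) (hr : Function.Injective r) (hc : Function.Injective c) :
    (∑ k, σ (r k) (c k)).re ≤ traceNorm σ := by
  classical
  set h := Matrix.isHermitian_conjTranspose_mul_self σ with hh
  set U : Matrix n n ℂ := (h.eigenvectorUnitary : Matrix n n ℂ) with hUdef
  have hUU' : U * star U = 1 := Matrix.mem_unitaryGroup_iff.mp h.eigenvectorUnitary.2
  have hUU : star U * U = 1 := Matrix.mem_unitaryGroup_iff'.mp h.eigenvectorUnitary.2
  have hdiag : star U * (σᴴ * σ) * U = diagonal (RCLike.ofReal ∘ h.eigenvalues) :=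
    by have := Matrix.IsHermitian.conjStarAlgAut_star_eigenvectorUnitary h; simpa using this
  -- eigenvalue identity
  have key1 : ∀ i, ∑ a, Complex.normSq ((σ * U) a i) = h.eigenvalues i := by
    intro i
    have e1 : ((σ * U)ᴴ * (σ * U)) i i = (h.eigenvalues i : ℂ) := by
      rw [conjTranspose_mul, show Uᴴ * σᴴ * (σ * U) = star U * (σᴴ * σ) * U by
        simp only [Matrix.star_eq_conjTranspose]; noncomm_ring, hdiag]
      simp [diagonal_apply_eq, Function.comp]
    have e2 : ((σ * U)ᴴ * (σ * U)) i i = ((∑ a, Complex.normSq ((σ * U) a i) : ℝ) : ℂ) := by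
      rw [mul_apply]
      push_cast
      refine Finset.sum_congr rfl fun a _ => ?_
      rw [conjTranspose_apply, Complex.star_def, ← Complex.normSq_eq_conj_mul_self]
    have := e1.symm.trans e2
    exact_mod_cast this.symm
  have hev_nonneg : ∀ i, 0 ≤ h.eigenvalues i := fun i => by
    rw [← key1 i]; exact Finset.sum_nonneg fun a _ => Complex.normSq_nonneg _
  -- decomposition of σ entries
  have hσab : ∀ a b, σ a b = ∑ i, (σ * U) a i * star (U b i) := by
    intro a b
    have : σ = σ * U * star U := by rw [mul_assoc, hUU', mul_one]
    conv_lhs => rw [this]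
    rw [mul_apply]
    refine Finset.sum_congr rfl fun i _ => ?_
    rw [Matrix.star_apply]
  -- main estimate
  calc (∑ k, σ (r k) (c k)).re
      = (∑ i, ∑ k, (σ * U) (r k) i * star (U (c k) i)).re := by
        rw [Finset.sum_comm]
        congr 1
        exact Finset.sum_congr rfl fun k _ => hσab _ _
    _ = ∑ i, (∑ k, (σ * U) (r k) i * star (U (c k) i)).re := Complex.re_sum _ _
    _ ≤ ∑ i, Real.sqrt (h.eigenvalues i) := by
        refine Finset.sum_le_sum fun i _ => ?_
        have hre : (∑ k, (σ * U) (r k) i * star (U (c k) i)).re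
            ≤ ∑ k, ‖(σ * U) (r k) i‖ * ‖U (c k) i‖ := by
          refine le_trans (Complex.re_le_norm _) ?_
          refine le_trans (norm_sum_le _ _) ?_
          refine le_of_eq (Finset.sum_congr rfl fun k _ => ?_)
          rw [Complex.star_def, norm_mul, Complex.norm_conj]
        refine hre.trans ?_
        -- Cauchy-Schwarz
        have hx : ∑ k, ‖(σ * U) (r k) i‖ ^ 2 ≤ h.eigenvalues i := by
          rw [← key1 i]
          have := Finset.sum_image (f := fun a => Complex.normSq ((σ * U) a i))
            (g := r) (fun x _ y _ hxy => hr hxy) (s := Finset.univ)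
          calc ∑ k, ‖(σ * U) (r k) i‖ ^ 2
              = ∑ k, Complex.normSq ((σ * U) (r k) i) := by
                refine Finset.sum_congr rfl fun k _ => ?_
                rw [Complex.sq_norm]
            _ = ∑ a ∈ Finset.univ.image r, Complex.normSq ((σ * U) a i) := this.symm
            _ ≤ ∑ a, Complex.normSq ((σ * U) a i) :=
                Finset.sum_le_sum_of_subset_of_nonneg (Finset.subset_univ _)
                  (fun a _ _ => Complex.normSq_nonneg _)
        have hy : ∑ k, ‖U (c k) i‖ ^ 2 ≤ 1 := by
          have h1 : (star U * U) i i = 1 := by rw [hUU]; simp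
          have h2 : ∑ b, Complex.normSq (U b i) = 1 := by
            have : (star U * U) i i = ((∑ b, Complex.normSq (U b i) : ℝ) : ℂ) := by
              rw [Matrix.mul_apply]
              push_cast
              refine Finset.sum_congr rfl fun b _ => ?_
              rw [Matrix.star_apply, Complex.star_def, ← Complex.normSq_eq_conj_mul_self]
            have := this.symm.trans h1
            exact_mod_cast this
          have := Finset.sum_image (f := fun b => Complex.normSq (U b i))
            (g := c) (fun x _ y _ hxy => hc hxy) (s := Finset.univ)
          calc ∑ k, ‖U (c k) i‖ ^ 2
              = ∑ k, Complex.normSq (U (c k) i) := by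
                refine Finset.sum_congr rfl fun k _ => ?_
                rw [Complex.sq_norm]
            _ = ∑ b ∈ Finset.univ.image c, Complex.normSq (U b i) := this.symm
            _ ≤ ∑ b, Complex.normSq (U b i) :=
                Finset.sum_le_sum_of_subset_of_nonneg (Finset.subset_univ _)
                  (fun a _ _ => Complex.normSq_nonneg _)
            _ = 1 := h2
        have hcs := Finset.sum_mul_sq_le_sq_mul_sq Finset.univ
          (fun k => ‖(σ * U) (r k) i‖) (fun k => ‖U (c k) i‖)
        have hnn : 0 ≤ ∑ k, ‖(σ * U) (r k) i‖ * ‖U (c k) i‖ :=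
          Finset.sum_nonneg fun k _ => mul_nonneg (norm_nonneg _) (norm_nonneg _)
        calc ∑ k, ‖(σ * U) (r k) i‖ * ‖U (c k) i‖
            = Real.sqrt ((∑ k, ‖(σ * U) (r k) i‖ * ‖U (c k) i‖)^2) :=
              (Real.sqrt_sq hnn).symm
          _ ≤ Real.sqrt ((h.eigenvalues i) * 1) := by
              refine Real.sqrt_le_sqrt ?_
              refine hcs.trans ?_
              exact mul_le_mul hx hy (Finset.sum_nonneg fun k _ => sq_nonneg _) (hev_nonneg i)
          _ = Real.sqrt (h.eigenvalues i) := by rw [mul_one]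
    _ = traceNorm σ := rfl

lemma sum_indicator_collapse {γ : Type*} [Fintype γ] [DecidableEq γ] {M : ℕ}
    (P : Fin M → γ) (g : γ → ℂ) :
    ∑ p, (∑ i, if p = P i then (1:ℂ) else 0) * g p = ∑ i, g (P i) := by
  simp_rw [Finset.sum_mul, ite_mul, one_mul, zero_mul]
  rw [Finset.sum_comm]
  simp [Finset.sum_ite_eq']

/-- Rains' overlap lemma. -/
theorem overlap_le_inv_schmidt_rank {A B : Type*} [Fintype A] [Fintype B]
    [DecidableEq A] [DecidableEq B] (M : ℕ) (hM : 0 < M)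
    (ιA : Fin M → A) (ιB : Fin M → B)
    (hιA : Function.Injective ιA) (hιB : Function.Injective ιB)
    (τ : Matrix (A × B) (A × B) ℂ) (hτ : τ ∈ PPTprime A B) :
    ((maxEnt M ιA ιB * τ).trace).re ≤ 1 / M := by
  classical
  obtain ⟨hpos, htn⟩ := hτ
  set σ : Matrix (A × B) (A × B) ℂ := partialTranspose τ with hσdef
  set r : Fin M × Fin M → A × B := fun k => (ιA k.2, ιB k.1) with hrdef
  set c : Fin M × Fin M → A × B := fun k => (ιA k.1, ιB k.2) with hcdef
  have hr : Function.Injective r := by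
    intro k k' hkk
    simp only [hrdef, Prod.mk.injEq] at hkk
    exact Prod.ext (hιB hkk.2) (hιA hkk.1)
  have hc : Function.Injective c := by
    intro k k' hkk
    simp only [hcdef, Prod.mk.injEq] at hkk
    exact Prod.ext (hιA hkk.1) (hιB hkk.2)
  have htr : (maxEnt M ιA ιB * τ).trace
      = (M : ℂ)⁻¹ * ∑ k : Fin M × Fin M, σ (r k) (c k) := by
    calc (maxEnt M ιA ιB * τ).trace
        = ∑ p, ∑ q, maxEnt M ιA ιB p q * τ q p := by
          simp [Matrix.trace, Matrix.mul_apply, Matrix.diag]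
      _ = (M : ℂ)⁻¹ * ∑ p, (∑ i, if p = (ιA i, ιB i) then (1:ℂ) else 0) *
            ∑ q, (∑ j, if q = (ιA j, ιB j) then (1:ℂ) else 0) * τ q p := by
          rw [Finset.mul_sum]
          refine Finset.sum_congr rfl fun p _ => ?_
          rw [Finset.mul_sum, Finset.mul_sum]
          refine Finset.sum_congr rfl fun q _ => ?_
          simp only [maxEnt, Matrix.of_apply]
          ring
      _ = (M : ℂ)⁻¹ * ∑ i, ∑ q, (∑ j, if q = (ιA j, ιB j) then (1:ℂ) else 0) *
            τ q (ιA i, ιB i) := by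
          rw [sum_indicator_collapse]
      _ = (M : ℂ)⁻¹ * ∑ i, ∑ j, τ (ιA j, ιB j) (ιA i, ιB i) := by
          congr 1
          exact Finset.sum_congr rfl fun i _ => sum_indicator_collapse _ _
      _ = (M : ℂ)⁻¹ * ∑ k : Fin M × Fin M, σ (r k) (c k) := by
          rw [Fintype.sum_prod_type]
          rfl
  have hS : (∑ k : Fin M × Fin M, σ (r k) (c k)).re ≤ 1 :=
    le_trans (holder_aux σ r c hr hc) htn
  have hMR : (0:ℝ) < (M:ℝ) := by exact_mod_cast hM
  rw [htr, show ((M:ℂ))⁻¹ = (((M:ℝ)⁻¹ : ℝ) : ℂ) by push_cast; ring,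
    Complex.re_ofReal_mul]
  calc ((M:ℝ))⁻¹ * (∑ k : Fin M × Fin M, σ (r k) (c k)).re
      ≤ ((M:ℝ))⁻¹ * 1 := by
        exact mul_le_mul_of_nonneg_left hS (by positivity)
    _ = 1 / M := by rw [mul_one, one_div]
end

section
/- A separable state has positive partial transpose: if ρ = Σ_x p(x) ρ_A^x ⊗ ρ_B^x is a convex combination of product density operators, then T_B(ρ) ≥ 0. -/
open scoped Matrix Kronecker
open Matrix
open scoped ComplexOrder

lemma kron_conjTranspose {A B : Type*} (M : Matrix A A ℂ) (N : Matrix B B ℂ) :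
    (M ⊗ₖ N)ᴴ = Mᴴ ⊗ₖ Nᴴ := by
  ext p q
  simp [conjTranspose_apply, kroneckerMap_apply, mul_comm]

lemma psd_kron {A B : Type*} [Fintype A] [Fintype B] {M : Matrix A A ℂ} {N : Matrix B B ℂ}
    (hM : M.PosSemidef) (hN : N.PosSemidef) : (M ⊗ₖ N).PosSemidef := by
  classical
  open scoped MatrixOrder in obtain ⟨P, rfl⟩ := CStarAlgebra.nonneg_iff_eq_star_mul_self.mp hM.nonneg
  open scoped MatrixOrder in obtain ⟨Q, rfl⟩ := CStarAlgebra.nonneg_iff_eq_star_mul_self.mp hN.nonneg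
  simp only [star_eq_conjTranspose]
  rw [mul_kronecker_mul, ← kron_conjTranspose]
  exact Matrix.posSemidef_conjTranspose_mul_self _

lemma psd_smul {n : Type*} [Fintype n] {M : Matrix n n ℂ} (hM : M.PosSemidef)
    {c : ℝ} (hc : 0 ≤ c) : ((c : ℂ) • M).PosSemidef := by
  constructor
  · have := hM.1
    unfold Matrix.IsHermitian at *
    rw [conjTranspose_smul, this]
    simp
  · intro x
    have := hM.2 x
    exact (hM.smul (by exact_mod_cast hc : (0:ℂ) ≤ (c:ℂ))).2 x

lemma psd_add {n : Type*} [Fintype n] {M N : Matrix n n ℂ}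
    (hM : M.PosSemidef) (hN : N.PosSemidef) : (M + N).PosSemidef := by
  constructor
  · exact hM.1.add hN.1
  · intro x
    have h1 := hM.2 x
    have h2 := hN.2 x
    simpa [mul_add, add_mul] using add_nonneg h1 h2

lemma psd_zero {n : Type*} [Fintype n] : (0 : Matrix n n ℂ).PosSemidef :=
  ⟨by simp [Matrix.IsHermitian], fun x => by simp⟩

/-- a separable state has positive partial transpose. -/
theorem separable_posSemidef_partialTranspose {A B X : Type*} [Fintype A] [Fintype B]
    [Fintype X] (p : X → ℝ) (hp : ∀ x, 0 ≤ p x) (hp1 : ∑ x, p x = 1)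
    (ρA : X → Matrix A A ℂ) (ρB : X → Matrix B B ℂ)
    (hρA : ∀ x, IsDensity (ρA x)) (hρB : ∀ x, IsDensity (ρB x)) :
    (partialTranspose (∑ x, (p x : ℂ) • (ρA x ⊗ₖ ρB x))).PosSemidef := by
  have key : partialTranspose (∑ x, (p x : ℂ) • (ρA x ⊗ₖ ρB x))
      = ∑ x, (p x : ℂ) • (ρA x ⊗ₖ (ρB x)ᵀ) := by
    ext ⟨a, b⟩ ⟨a', b'⟩
    simp [partialTranspose, Finset.sum_apply, Matrix.sum_apply, kroneckerMap_apply, Matrix.smul_apply, transpose_apply]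
  rw [key]
  apply Finset.sum_induction _ _ (fun a b ha hb => psd_add ha hb) psd_zero
  intro x _
  exact psd_smul (psd_kron (hρA x).1 ((hρB x).1.transpose)) (hp x)
end

section
/- Operator monotonicity bound for the sandwiched Rényi relative entropy: let α > 1, let ρ, ρ' be density operators and σ a positive definite operator on a finite-dimensional Hilbert space, and suppose ρ ≤ γ ρ' for some γ ≥ 1. Then D̃_α(ρ‖σ) ≤ (α/(α−1)) log γ + D̃_α(ρ'‖σ). -/
open scoped Matrix Kronecker
open Matrix
open scoped ComplexOrder

/-! ### Auxiliary lemmas for Statement 7 -/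

section Aux7

open Finset

variable {n : Type*} [Fintype n] [DecidableEq n]

open Finset in
private lemma aux7_sum_f_le {ι : Type*} [DecidableEq ι] (f : ℝ → ℝ) (hf : Monotone f) :
    ∀ (N : ℕ) (s t : Finset ι) (p q : ι → ℝ), s.card = N → t.card = N →
    (∀ x : ℝ, (s.filter fun i => x ≤ p i).card ≤ (t.filter fun i => x ≤ q i).card) →
    (∑ i ∈ s, f (p i)) ≤ ∑ i ∈ t, f (q i) := by
  intro N
  induction N with
  | zero =>
    intro s t p q hs ht _
    rw [Finset.card_eq_zero.mp hs, Finset.card_eq_zero.mp ht]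
    simp
  | succ N ih =>
    intro s t p q hs ht hcount
    have hsne : s.Nonempty := Finset.card_pos.mp (by omega)
    have htne : t.Nonempty := Finset.card_pos.mp (by omega)
    obtain ⟨i0, hi0s, hi0max⟩ := s.exists_max_image p hsne
    obtain ⟨j0, hj0t, hj0max⟩ := t.exists_max_image q htne
    have hp0q0 : p i0 ≤ q j0 := by
      have h := hcount (p i0)
      have hmem : i0 ∈ s.filter fun i => p i0 ≤ p i :=
        Finset.mem_filter.mpr ⟨hi0s, le_refl _⟩
      have hpos : 0 < (t.filter fun i => p i0 ≤ q i).card :=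
        lt_of_lt_of_le (Finset.card_pos.mpr ⟨i0, hmem⟩) h
      obtain ⟨j, hj⟩ := Finset.card_pos.mp hpos
      obtain ⟨hjt, hjle⟩ := Finset.mem_filter.mp hj
      exact le_trans hjle (hj0max j hjt)
    rw [← Finset.add_sum_erase s _ hi0s, ← Finset.add_sum_erase t _ hj0t]
    refine add_le_add (hf hp0q0) (ih _ _ p q ?_ ?_ ?_)
    · rw [Finset.card_erase_of_mem hi0s, hs]
      omega
    · rw [Finset.card_erase_of_mem hj0t, ht]
      omega
    · intro x
      by_cases hx : x ≤ p i0
      · have e1 : ((s.erase i0).filter fun i => x ≤ p i)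
            = (s.filter fun i => x ≤ p i).erase i0 := by rw [Finset.filter_erase]
        have e2 : ((t.erase j0).filter fun i => x ≤ q i)
            = (t.filter fun i => x ≤ q i).erase j0 := by rw [Finset.filter_erase]
        have c1 : ((s.filter fun i => x ≤ p i).erase i0).card
            = (s.filter fun i => x ≤ p i).card - 1 :=
          Finset.card_erase_of_mem (Finset.mem_filter.mpr ⟨hi0s, hx⟩)
        have c2 : ((t.filter fun i => x ≤ q i).erase j0).card
            = (t.filter fun i => x ≤ q i).card - 1 :=
          Finset.card_erase_of_mem (Finset.mem_filter.mpr ⟨hj0t, le_trans hx hp0q0⟩)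
        rw [e1, e2, c1, c2]
        exact Nat.sub_le_sub_right (hcount x) 1
      · have : (s.erase i0).filter (fun i => x ≤ p i) = ∅ := by
          apply Finset.filter_eq_empty_iff.mpr
          intro i hi
          exact fun hxi => hx (le_trans hxi (hi0max i (Finset.mem_of_mem_erase hi)))
        simp [this]

private lemma aux7_dot_star_self (v : n → ℂ) :
    star v ⬝ᵥ v = ((∑ i, Complex.normSq (v i) : ℝ) : ℂ) := by
  push_cast
  simp only [dotProduct, Pi.star_apply, Complex.star_def,
    ← Complex.normSq_eq_conj_mul_self]

private lemma aux7_quad_conj (U : Matrix n n ℂ) (d : n → ℝ) (x : n → ℂ) :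
    star x ⬝ᵥ ((U * Matrix.diagonal (fun i => (d i : ℂ)) * star U) *ᵥ x)
      = ((∑ i, d i * Complex.normSq ((star U *ᵥ x) i) : ℝ) : ℂ) := by
  set y := star U *ᵥ x with hy
  have h1 : (U * Matrix.diagonal (fun i => (d i : ℂ)) * star U) *ᵥ x
      = U *ᵥ (Matrix.diagonal (fun i => (d i : ℂ)) *ᵥ y) := by
    rw [mulVec_mulVec, mulVec_mulVec]
  have h2 : star x ᵥ* U = star y := by
    rw [hy, star_mulVec, star_eq_conjTranspose, conjTranspose_conjTranspose]
  rw [h1, dotProduct_mulVec, h2]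
  push_cast
  simp only [dotProduct, mulVec_diagonal, Pi.star_apply]
  refine Finset.sum_congr rfl fun i _ => ?_
  calc star (y i) * ((d i : ℂ) * y i) = (d i : ℂ) * (y i * star (y i)) := by ring
  _ = (d i : ℂ) * (Complex.normSq (y i) : ℂ) := by
      rw [Complex.star_def, Complex.mul_conj]

private lemma aux7_norm_conj {U : Matrix n n ℂ} (hU : U ∈ Matrix.unitaryGroup n ℂ)
    (x : n → ℂ) :
    ∑ i, Complex.normSq ((star U *ᵥ x) i) = ∑ i, Complex.normSq (x i) := by
  have h : star (star U *ᵥ x) ⬝ᵥ (star U *ᵥ x) = star x ⬝ᵥ x := by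
    rw [star_mulVec, star_eq_conjTranspose, conjTranspose_conjTranspose,
      dotProduct_mulVec, vecMul_vecMul, ← star_eq_conjTranspose,
      Matrix.mem_unitaryGroup_iff.mp hU, vecMul_one]
  rw [aux7_dot_star_self, aux7_dot_star_self] at h
  exact_mod_cast h

private lemma aux7_mulVec_star_eq_zero_iff {U : Matrix n n ℂ}
    (hU : U ∈ Matrix.unitaryGroup n ℂ) (x : n → ℂ) : star U *ᵥ x = 0 ↔ x = 0 := by
  constructor
  · intro h
    have hn := aux7_norm_conj hU x
    rw [h] at hn
    simp only [Pi.zero_apply, map_zero, Finset.sum_const_zero] at hn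
    have hz := (Finset.sum_eq_zero_iff_of_nonneg
      (fun i _ => Complex.normSq_nonneg (x i))).mp hn.symm
    funext i
    exact Complex.normSq_eq_zero.mp (hz i (Finset.mem_univ i))
  · rintro rfl
    simp

private lemma aux7_finrank_ker_funLeft (S : Finset n) :
    Module.finrank ℂ (LinearMap.ker (LinearMap.funLeft ℂ ℂ (Subtype.val : {i // i ∈ S} → n)))
      = Fintype.card n - S.card := by
  have hsurj : Function.Surjective (LinearMap.funLeft ℂ ℂ (Subtype.val : {i // i ∈ S} → n)) :=
    LinearMap.funLeft_surjective_of_injective ℂ ℂ _ Subtype.val_injective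
  have h := LinearMap.finrank_range_add_finrank_ker
    (LinearMap.funLeft ℂ ℂ (Subtype.val : {i // i ∈ S} → n))
  rw [LinearMap.range_eq_top.mpr hsurj, finrank_top, Module.finrank_pi, Module.finrank_pi,
    Fintype.card_coe] at h
  omega

/-- The linear equivalence given by multiplication with `star U` for unitary `U`. -/
private noncomputable def aux7_unitaryMulEquiv {U : Matrix n n ℂ}
    (hU : U ∈ Matrix.unitaryGroup n ℂ) : (n → ℂ) ≃ₗ[ℂ] (n → ℂ) :=
  LinearEquiv.ofLinear (Matrix.mulVecLin (star U)) (Matrix.mulVecLin U)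
    (by rw [← Matrix.mulVecLin_mul, Matrix.mem_unitaryGroup_iff'.mp hU, Matrix.mulVecLin_one])
    (by rw [← Matrix.mulVecLin_mul, Matrix.mem_unitaryGroup_iff.mp hU, Matrix.mulVecLin_one])

private lemma aux7_finrank_comap_unitary {U : Matrix n n ℂ}
    (hU : U ∈ Matrix.unitaryGroup n ℂ) (S : Finset n) :
    Module.finrank ℂ (Submodule.comap ((star U).mulVecLin)
      (LinearMap.ker (LinearMap.funLeft ℂ ℂ (Subtype.val : {i // i ∈ S} → n))))
      = Fintype.card n - S.card := by
  have he : (star U).mulVecLin = (aux7_unitaryMulEquiv hU : (n → ℂ) →ₗ[ℂ] (n → ℂ)) := rfl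
  rw [he, Submodule.comap_equiv_eq_map_symm,
    LinearEquiv.finrank_map_eq, aux7_finrank_ker_funLeft]

private lemma aux7_mem_comap_unitary {U : Matrix n n ℂ} (S : Finset n) (x : n → ℂ) :
    x ∈ Submodule.comap ((star U).mulVecLin)
      (LinearMap.ker (LinearMap.funLeft ℂ ℂ (Subtype.val : {i // i ∈ S} → n)))
      ↔ ∀ i ∈ S, (star U *ᵥ x) i = 0 := by
  simp only [Submodule.mem_comap, LinearMap.mem_ker, Matrix.mulVecLin_apply]
  constructor
  · intro h i hi
    exact congrFun h ⟨i, hi⟩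
  · intro h
    funext i
    exact h i.1 i.2

/-- Weyl-type counting monotonicity: if `P ≤ Q` then for every `t` the number of
eigenvalues of `P` that are `≥ t` is at most the corresponding number for `Q`. -/
private lemma aux7_count_eig_le {P Q : Matrix n n ℂ} (hP : P.IsHermitian) (hQ : Q.IsHermitian)
    (hle : (Q - P).PosSemidef) (t : ℝ) :
    (univ.filter fun i => t ≤ hP.eigenvalues i).card
      ≤ (univ.filter fun i => t ≤ hQ.eigenvalues i).card := by
  by_contra hc
  push_neg at hc
  set UP := (hP.eigenvectorUnitary : Matrix n n ℂ) with hUPdef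
  set UQ := (hQ.eigenvectorUnitary : Matrix n n ℂ) with hUQdef
  have hUP : UP ∈ Matrix.unitaryGroup n ℂ := hP.eigenvectorUnitary.2
  have hUQ : UQ ∈ Matrix.unitaryGroup n ℂ := hQ.eigenvectorUnitary.2
  set SP : Finset n := univ.filter fun i => ¬ t ≤ hP.eigenvalues i with hSPdef
  set SQ : Finset n := univ.filter fun i => t ≤ hQ.eigenvalues i with hSQdef
  set WP := Submodule.comap ((star UP).mulVecLin)
    (LinearMap.ker (LinearMap.funLeft ℂ ℂ (Subtype.val : {i // i ∈ SP} → n))) with hWPdef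
  set WQ := Submodule.comap ((star UQ).mulVecLin)
    (LinearMap.ker (LinearMap.funLeft ℂ ℂ (Subtype.val : {i // i ∈ SQ} → n))) with hWQdef
  have hWP : Module.finrank ℂ WP = Fintype.card n - SP.card := aux7_finrank_comap_unitary hUP SP
  have hWQ : Module.finrank ℂ WQ = Fintype.card n - SQ.card := aux7_finrank_comap_unitary hUQ SQ
  have hsplit : (univ.filter fun i => t ≤ hP.eigenvalues i).card + SP.card = Fintype.card n := by
    rw [hSPdef, Finset.card_filter_add_card_filter_not, Finset.card_univ]
  have hSQle : SQ.card ≤ Fintype.card n := by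
    rw [← Finset.card_univ]; exact Finset.card_filter_le _ _
  have hinf : WP ⊓ WQ ≠ ⊥ := by
    intro hbot
    have hsum := Submodule.finrank_sup_add_finrank_inf_eq WP WQ
    rw [hbot, finrank_bot, add_zero] at hsum
    have hsup : Module.finrank ℂ ↥(WP ⊔ WQ) ≤ Fintype.card n := by
      have h := Submodule.finrank_le (WP ⊔ WQ)
      rwa [Module.finrank_pi] at h
    omega
  obtain ⟨x, hx, hx0⟩ := (Submodule.ne_bot_iff _).mp hinf
  obtain ⟨hxP, hxQ⟩ := Submodule.mem_inf.mp hx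
  set yP := star UP *ᵥ x with hyPdef
  set yQ := star UQ *ᵥ x with hyQdef
  have hyP0 : ∀ i, ¬ t ≤ hP.eigenvalues i → yP i = 0 := fun i hi =>
    (aux7_mem_comap_unitary SP x).mp hxP i (Finset.mem_filter.mpr ⟨Finset.mem_univ _, hi⟩)
  have hyQ0 : ∀ i, t ≤ hQ.eigenvalues i → yQ i = 0 := fun i hi =>
    (aux7_mem_comap_unitary SQ x).mp hxQ i (Finset.mem_filter.mpr ⟨Finset.mem_univ _, hi⟩)
  set N := ∑ i, Complex.normSq (x i) with hNdef
  have hNP : ∑ i, Complex.normSq (yP i) = N := aux7_norm_conj hUP x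
  have hNQ : ∑ i, Complex.normSq (yQ i) = N := aux7_norm_conj hUQ x
  have hPst : P = UP * Matrix.diagonal (fun i => (hP.eigenvalues i : ℂ)) * star UP := by
    conv_lhs => rw [hP.spectral_theorem]
    rfl
  have hQst : Q = UQ * Matrix.diagonal (fun i => (hQ.eigenvalues i : ℂ)) * star UQ := by
    conv_lhs => rw [hQ.spectral_theorem]
    rfl
  set rP := ∑ i, hP.eigenvalues i * Complex.normSq (yP i) with hrPdef
  set rQ := ∑ i, hQ.eigenvalues i * Complex.normSq (yQ i) with hrQdef
  have hPval : star x ⬝ᵥ (P *ᵥ x) = (rP : ℂ) := by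
    conv_lhs => rw [hPst]
    exact aux7_quad_conj UP hP.eigenvalues x
  have hQval : star x ⬝ᵥ (Q *ᵥ x) = (rQ : ℂ) := by
    conv_lhs => rw [hQst]
    exact aux7_quad_conj UQ hQ.eigenvalues x
  have hrPQ : rP ≤ rQ := by
    have h0 := hle.dotProduct_mulVec_nonneg x
    rw [sub_mulVec, dotProduct_sub, hPval, hQval, ← Complex.ofReal_sub,
      Complex.zero_le_real] at h0
    linarith
  have hrPlb : t * N ≤ rP := by
    calc t * N = ∑ i, t * Complex.normSq (yP i) := by rw [← Finset.mul_sum, hNP]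
    _ ≤ rP := by
      refine Finset.sum_le_sum fun i _ => ?_
      by_cases hi : t ≤ hP.eigenvalues i
      · exact mul_le_mul_of_nonneg_right hi (Complex.normSq_nonneg _)
      · rw [hyP0 i hi]; simp
  have hrQub : rQ < t * N := by
    have hyQne : yQ ≠ 0 := fun h => hx0 ((aux7_mulVec_star_eq_zero_iff hUQ x).mp h)
    obtain ⟨j, hj⟩ := Function.ne_iff.mp hyQne
    have hpos : 0 < ∑ i, (t - hQ.eigenvalues i) * Complex.normSq (yQ i) := by
      refine Finset.sum_pos' (fun i _ => ?_) ⟨j, Finset.mem_univ j, ?_⟩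
      · by_cases hi : t ≤ hQ.eigenvalues i
        · rw [hyQ0 i hi]; simp
        · exact mul_nonneg (by linarith) (Complex.normSq_nonneg _)
      · have hjt : hQ.eigenvalues j < t := by
          by_contra hjc
          exact hj (hyQ0 j (by linarith))
        exact mul_pos (by linarith) (Complex.normSq_pos.mpr hj)
    have hexp : ∑ i, (t - hQ.eigenvalues i) * Complex.normSq (yQ i) = t * N - rQ := by
      rw [hrQdef, ← hNQ, Finset.mul_sum, ← Finset.sum_sub_distrib]
      exact Finset.sum_congr rfl fun i _ => by ring
    rw [hexp] at hpos
    linarith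
  linarith

private lemma aux7_trace_conj_diag {U : Matrix n n ℂ} (hU : U ∈ Matrix.unitaryGroup n ℂ)
    (d : n → ℂ) :
    Matrix.trace (U * Matrix.diagonal d * star U) = ∑ i, d i := by
  rw [Matrix.trace_mul_cycle, Matrix.mem_unitaryGroup_iff'.mp hU,
    Matrix.one_mul, Matrix.trace_diagonal]

private lemma aux7_spectrum_nonneg {M : Matrix n n ℂ} (hM : M.PosSemidef) :
    ∀ x ∈ spectrum ℝ M, 0 ≤ x := by
  intro x hx
  rw [hM.1.spectrum_real_eq_range_eigenvalues] at hx
  obtain ⟨i, rfl⟩ := hx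
  exact hM.eigenvalues_nonneg i

private lemma aux7_traceRpow_eq_re_trace_cfc {M : Matrix n n ℂ} (hM : M.PosSemidef) (α : ℝ) :
    traceRpow M α = (Matrix.trace (cfc (fun x : ℝ => (max x 0) ^ α) M)).re := by
  rw [hM.1.cfc_eq]
  have hrfl : (hM.1.cfc fun x : ℝ => (max x 0) ^ α)
      = (hM.1.eigenvectorUnitary : Matrix n n ℂ)
        * Matrix.diagonal (RCLike.ofReal ∘ (fun x : ℝ => (max x 0) ^ α) ∘ hM.1.eigenvalues)
        * star (hM.1.eigenvectorUnitary : Matrix n n ℂ) := rfl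
  rw [hrfl, aux7_trace_conj_diag hM.1.eigenvectorUnitary.2, Complex.re_sum]
  unfold traceRpow
  rw [dif_pos hM.1]
  refine Finset.sum_congr rfl fun i _ => ?_
  simp [max_eq_left (hM.eigenvalues_nonneg i)]

private lemma aux7_traceRpow_smul {M : Matrix n n ℂ} (hM : M.PosSemidef) {γ : ℝ} (hγ : 0 < γ)
    {α : ℝ} (hsm : (γ • M).PosSemidef) :
    traceRpow (γ • M) α = γ ^ α * traceRpow M α := by
  have hfin := Matrix.finite_real_spectrum (A := M) (𝕜 := ℂ)
  have hcont1 : ContinuousOn (fun x : ℝ => (max x 0) ^ α) ((γ * ·) '' spectrum ℝ M) :=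
    (hfin.image _).continuousOn _
  have hcont2 : ContinuousOn (fun x : ℝ => (max x 0) ^ α) (spectrum ℝ M) :=
    hfin.continuousOn _
  have hsa : IsSelfAdjoint M := hM.1
  rw [aux7_traceRpow_eq_re_trace_cfc hsm, aux7_traceRpow_eq_re_trace_cfc hM]
  have h2 : cfc (fun x : ℝ => (max x 0) ^ α) (γ • M)
      = cfc (fun x : ℝ => (max (γ * x) 0) ^ α) M :=
    (cfc_comp_const_mul γ (fun x : ℝ => (max x 0) ^ α) M hcont1 hsa).symm
  have h3 : cfc (fun x : ℝ => (max (γ * x) 0) ^ α) M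
      = cfc (fun x : ℝ => γ ^ α * (max x 0) ^ α) M := by
    apply cfc_congr
    intro x hx
    have hx0 : 0 ≤ x := aux7_spectrum_nonneg hM x hx
    simp only [max_eq_left (mul_nonneg hγ.le hx0), max_eq_left hx0]
    exact Real.mul_rpow hγ.le hx0
  have h4 : cfc (fun x : ℝ => γ ^ α * (max x 0) ^ α) M
      = γ ^ α • cfc (fun x : ℝ => (max x 0) ^ α) M :=
    cfc_const_mul _ _ M hcont2
  rw [h2, h3, h4, Matrix.trace_smul]
  simp [Complex.smul_re]

private lemma aux7_traceRpow_pos {M : Matrix n n ℂ} (hM : M.PosSemidef) (hne : M ≠ 0)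
    (α : ℝ) : 0 < traceRpow M α := by
  unfold traceRpow
  rw [dif_pos hM.1]
  have hex : ∃ j, hM.1.eigenvalues j ≠ 0 := by
    by_contra h
    push_neg at h
    apply hne
    have hst := hM.1.spectral_theorem
    have hz : (RCLike.ofReal ∘ hM.1.eigenvalues : n → ℂ) = 0 := by
      funext i
      simp [h i]
    rw [hst, hz]
    have hd0 : Matrix.diagonal (0 : n → ℂ) = 0 := Matrix.diagonal_zero
    rw [hd0, map_zero]
  obtain ⟨j, hj⟩ := hex
  exact Finset.sum_pos' (fun i _ => Real.rpow_nonneg (hM.eigenvalues_nonneg i) α)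
    ⟨j, Finset.mem_univ j,
      Real.rpow_pos_of_pos (lt_of_le_of_ne (hM.eigenvalues_nonneg j) (Ne.symm hj)) α⟩

private lemma aux7_traceRpow_mono {P Q : Matrix n n ℂ} (hP : P.PosSemidef)
    (hQ : Q.PosSemidef) (hle : (Q - P).PosSemidef) {α : ℝ} (hα : 0 ≤ α) :
    traceRpow P α ≤ traceRpow Q α := by
  unfold traceRpow
  rw [dif_pos hP.1, dif_pos hQ.1]
  have hg : Monotone (fun x : ℝ => (max x 0) ^ α) := fun a b hab =>
    Real.rpow_le_rpow (le_max_right a 0) (max_le_max hab le_rfl) hα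
  have h1 : ∀ i : n, hP.1.eigenvalues i ^ α = (max (hP.1.eigenvalues i) 0) ^ α := fun i => by
    rw [max_eq_left (hP.eigenvalues_nonneg i)]
  have h2 : ∀ i : n, hQ.1.eigenvalues i ^ α = (max (hQ.1.eigenvalues i) 0) ^ α := fun i => by
    rw [max_eq_left (hQ.eigenvalues_nonneg i)]
  simp only [h1, h2]
  exact aux7_sum_f_le _ hg (Fintype.card n) univ univ _ _ (Finset.card_univ)
    (Finset.card_univ) (fun x => aux7_count_eig_le hP.1 hQ.1 hle x)

private lemma aux7_matFun_posDef {σ : Matrix n n ℂ} (hσ : σ.PosDef) {f : ℝ → ℝ}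
    (hf : ∀ x, 0 < x → 0 < f x) : (matFun f σ).PosDef := by
  unfold matFun
  rw [dif_pos hσ.1]
  set U := (hσ.1.eigenvectorUnitary : Matrix n n ℂ) with hUdef
  have hU : U ∈ Matrix.unitaryGroup n ℂ := hσ.1.eigenvectorUnitary.2
  have hdH : (Matrix.diagonal (fun i => (f (hσ.1.eigenvalues i) : ℂ)))ᴴ
      = Matrix.diagonal (fun i => (f (hσ.1.eigenvalues i) : ℂ)) := by
    rw [Matrix.diagonal_conjTranspose]
    congr 1
    funext i
    simp [Pi.star_def, Complex.star_def, Complex.conj_ofReal]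
  refine Matrix.PosDef.of_dotProduct_mulVec_pos ?_ ?_
  · show (U * _ * Uᴴ)ᴴ = _
    rw [Matrix.conjTranspose_mul, Matrix.conjTranspose_mul, hdH,
      Matrix.conjTranspose_conjTranspose, Matrix.mul_assoc]
  · intro x hx
    rw [← Matrix.star_eq_conjTranspose,
      aux7_quad_conj U (fun i => f (hσ.1.eigenvalues i)) x]
    rw [Complex.zero_lt_real]
    have hyne : star U *ᵥ x ≠ 0 := fun h =>
      hx ((aux7_mulVec_star_eq_zero_iff hU x).mp h)
    obtain ⟨j, hj⟩ := Function.ne_iff.mp hyne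
    refine Finset.sum_pos' (fun i _ => mul_nonneg (hf _ (hσ.eigenvalues_pos i)).le
      (Complex.normSq_nonneg _)) ⟨j, Finset.mem_univ j, ?_⟩
    exact mul_pos (hf _ (hσ.eigenvalues_pos j)) (Complex.normSq_pos.mpr hj)

end Aux7

/-- operator monotonicity bound for the sandwiched Rényi relative
entropy: `ρ ≤ γ ρ'` implies `D̃_α(ρ‖σ) ≤ (α/(α−1)) log γ + D̃_α(ρ'‖σ)`. -/
theorem sandRenyi_le_of_le_smul {n : Type*} [Fintype n] [DecidableEq n]
    (α γ : ℝ) (hα : 1 < α) (hγ : 1 ≤ γ)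
    (ρ ρ' σ : Matrix n n ℂ) (hρ : IsDensity ρ) (hρ' : IsDensity ρ')
    (hσ : σ.PosDef) (hle : (γ • ρ' - ρ).PosSemidef) :
    sandRenyi α ρ σ ≤ α / (α - 1) * Real.logb 2 γ + sandRenyi α ρ' σ := by
  have hα1 : 0 < α - 1 := by linarith
  have hγ0 : 0 < γ := by linarith
  unfold sandRenyi
  set c : ℝ → ℝ := fun x => x ^ ((1 - α) / (2 * α)) with hc
  set S := matFun c σ with hSdef
  have hSpd : S.PosDef := aux7_matFun_posDef hσ (fun x hx => Real.rpow_pos_of_pos hx _)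
  have hSh : Sᴴ = S := hSpd.1
  set A := S * ρ * S with hAdef
  set A' := S * ρ' * S with hA'def
  have hApsd : A.PosSemidef := by
    have h := hρ.1.mul_mul_conjTranspose_same S
    rwa [hSh] at h
  have hA'psd : A'.PosSemidef := by
    have h := hρ'.1.mul_mul_conjTranspose_same S
    rwa [hSh] at h
  have hsub : (γ • A' - A).PosSemidef := by
    have h := hle.mul_mul_conjTranspose_same S
    rw [hSh] at h
    have he : S * (γ • ρ' - ρ) * S = γ • A' - A := by
      rw [Matrix.mul_sub, Matrix.sub_mul, Matrix.mul_smul, Matrix.smul_mul]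
    rwa [he] at h
  have hsm : (γ • A').PosSemidef := by
    have h := hApsd.add hsub
    have he : A + (γ • A' - A) = γ • A' := by abel
    rwa [he] at h
  have hAne : A ≠ 0 := by
    intro h0
    obtain ⟨u, hu⟩ := hSpd.isUnit
    have hρ0 : ρ = (↑u⁻¹ : Matrix n n ℂ) * A * (↑u⁻¹ : Matrix n n ℂ) := by
      rw [hAdef, ← hu]
      calc ρ = ((↑u⁻¹ : Matrix n n ℂ) * ↑u) * ρ * ((↑u : Matrix n n ℂ) * (↑u⁻¹ : Matrix n n ℂ)) := by
            rw [u.inv_mul, u.mul_inv, Matrix.one_mul, Matrix.mul_one]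
      _ = (↑u⁻¹ : Matrix n n ℂ) * (↑u * ρ * ↑u) * (↑u⁻¹ : Matrix n n ℂ) := by noncomm_ring
    rw [h0, Matrix.mul_zero, Matrix.zero_mul] at hρ0
    have htr := hρ.2
    rw [hρ0, Matrix.trace_zero] at htr
    exact zero_ne_one htr
  have hA'ne : A' ≠ 0 := by
    intro h0
    obtain ⟨u, hu⟩ := hSpd.isUnit
    have hρ0 : ρ' = (↑u⁻¹ : Matrix n n ℂ) * A' * (↑u⁻¹ : Matrix n n ℂ) := by
      rw [hA'def, ← hu]
      calc ρ' = ((↑u⁻¹ : Matrix n n ℂ) * ↑u) * ρ' * ((↑u : Matrix n n ℂ) * (↑u⁻¹ : Matrix n n ℂ)) := by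
            rw [u.inv_mul, u.mul_inv, Matrix.one_mul, Matrix.mul_one]
      _ = (↑u⁻¹ : Matrix n n ℂ) * (↑u * ρ' * ↑u) * (↑u⁻¹ : Matrix n n ℂ) := by noncomm_ring
    rw [h0, Matrix.mul_zero, Matrix.zero_mul] at hρ0
    have htr := hρ'.2
    rw [hρ0, Matrix.trace_zero] at htr
    exact zero_ne_one htr
  have hTA : 0 < traceRpow A α := aux7_traceRpow_pos hApsd hAne α
  have hTA' : 0 < traceRpow A' α := aux7_traceRpow_pos hA'psd hA'ne α
  have hmono : traceRpow A α ≤ traceRpow (γ • A') α :=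
    aux7_traceRpow_mono hApsd hsm hsub (by linarith : (0:ℝ) ≤ α)
  rw [aux7_traceRpow_smul hA'psd hγ0 hsm] at hmono
  have hlogb : Real.logb 2 (traceRpow A α)
      ≤ α * Real.logb 2 γ + Real.logb 2 (traceRpow A' α) := by
    have h1 : Real.logb 2 (traceRpow A α) ≤ Real.logb 2 (γ ^ α * traceRpow A' α) :=
      Real.logb_le_logb_of_le (by norm_num) hTA hmono
    have h2 : Real.logb 2 (γ ^ α * traceRpow A' α)
        = α * Real.logb 2 γ + Real.logb 2 (traceRpow A' α) := by
      rw [Real.logb_mul (ne_of_gt (Real.rpow_pos_of_pos hγ0 α)) (ne_of_gt hTA')]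
      congr 1
      unfold Real.logb
      rw [Real.log_rpow hγ0]
      ring
    linarith
  calc (α - 1)⁻¹ * Real.logb 2 (traceRpow A α)
      ≤ (α - 1)⁻¹ * (α * Real.logb 2 γ + Real.logb 2 (traceRpow A' α)) :=
        mul_le_mul_of_nonneg_left hlogb (inv_nonneg.mpr hα1.le)
    _ = α / (α - 1) * Real.logb 2 γ + (α - 1)⁻¹ * Real.logb 2 (traceRpow A' α) := by
        rw [div_eq_mul_inv]
        ring
end

section
/- The tensor product of two PPT' operators is PPT': if τ₁ ∈ PPT'(A:B) and τ₂ ∈ PPT'(A':B'), then τ₁ ⊗ τ₂ ∈ PPT'(AA':BB'). -/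
open scoped Matrix Kronecker
open Matrix
open scoped ComplexOrder

noncomputable section PPTaux

noncomputable def Matrix.PosSemidef.sqrt {n : Type*} [Fintype n] [DecidableEq n] {P : Matrix n n ℂ}
    (hP : P.PosSemidef) : Matrix n n ℂ :=
  (hP.1.eigenvectorUnitary : Matrix n n ℂ) *
    diagonal (fun i => ((Real.sqrt (hP.1.eigenvalues i) : ℝ) : ℂ)) *
    star (hP.1.eigenvectorUnitary : Matrix n n ℂ)

open scoped MatrixOrder in
lemma Matrix.PosSemidef.sqrt_eq_cfc {n : Type*} [Fintype n] [DecidableEq n] {P : Matrix n n ℂ}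
    (hP : P.PosSemidef) : hP.sqrt = CFC.sqrt P := by
  rw [CFC.sqrt_eq_cfc, cfc_nnreal_eq_real _ P hP.nonneg, hP.1.cfc_eq]
  simp only [IsHermitian.cfc, Unitary.conjStarAlgAut_apply, Matrix.PosSemidef.sqrt]
  congr 3
  ext i
  simp [Real.coe_sqrt, Real.coe_toNNReal', hP.eigenvalues_nonneg i]

open scoped MatrixOrder in
lemma Matrix.PosSemidef.posSemidef_sqrt {n : Type*} [Fintype n] [DecidableEq n] {P : Matrix n n ℂ}
    (hP : P.PosSemidef) : hP.sqrt.PosSemidef := by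
  rw [hP.sqrt_eq_cfc]
  exact nonneg_iff_posSemidef.mp (CFC.sqrt_nonneg P)

open scoped MatrixOrder in
lemma Matrix.PosSemidef.sqrt_mul_self {n : Type*} [Fintype n] [DecidableEq n] {P : Matrix n n ℂ}
    (hP : P.PosSemidef) : hP.sqrt * hP.sqrt = P := by
  rw [hP.sqrt_eq_cfc]
  exact CFC.sqrt_mul_sqrt_self P hP.nonneg

open scoped MatrixOrder in
lemma Matrix.PosSemidef.eq_sqrt_of_sq_eq {n : Type*} [Fintype n] [DecidableEq n] {B : Matrix n n ℂ}
    (hB : B.PosSemidef) {P : Matrix n n ℂ} (hP : P.PosSemidef) (h : B ^ 2 = P) : B = hP.sqrt := by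
  rw [hP.sqrt_eq_cfc]
  exact ((CFC.sqrt_eq_iff P B hP.nonneg hB.nonneg).mpr (by rw [← sq]; exact h)).symm

lemma conjTranspose_kron {m n p q : Type*} (M : Matrix m p ℂ) (N : Matrix n q ℂ) :
    (M ⊗ₖ N)ᴴ = Mᴴ ⊗ₖ Nᴴ := by
  ext ⟨i, j⟩ ⟨k, l⟩
  simp [conjTranspose_apply, kroneckerMap_apply]

lemma psd_kron_s10 {m n : Type*} [Fintype m] [Fintype n] [DecidableEq m] [DecidableEq n]
    {P : Matrix m m ℂ} {Q : Matrix n n ℂ} (hP : P.PosSemidef) (hQ : Q.PosSemidef) :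
    (P ⊗ₖ Q).PosSemidef := by
  exact hP.kronecker hQ

lemma trace_sqrt {n : Type*} [Fintype n] [DecidableEq n] {P : Matrix n n ℂ}
    (hP : P.PosSemidef) :
    hP.sqrt.trace = ((∑ i, Real.sqrt (hP.1.eigenvalues i) : ℝ) : ℂ) := by
  have hu : (star hP.1.eigenvectorUnitary.1 : Matrix n n ℂ) * hP.1.eigenvectorUnitary.1 = 1 :=
    (Unitary.mem_iff.mp hP.1.eigenvectorUnitary.2).1
  rw [Matrix.PosSemidef.sqrt, trace_mul_cycle, hu, one_mul, trace_diagonal]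
  push_cast
  rfl

lemma traceNorm_eq {n : Type*} [Fintype n] [DecidableEq n] (M : Matrix n n ℂ) :
    traceNorm M = ((Matrix.posSemidef_conjTranspose_mul_self M).sqrt.trace).re := by
  rw [trace_sqrt, Complex.ofReal_re, traceNorm]

lemma traceNorm_nonneg {n : Type*} [Fintype n] [DecidableEq n] (M : Matrix n n ℂ) :
    0 ≤ traceNorm M :=
  Finset.sum_nonneg fun _ _ => Real.sqrt_nonneg _

lemma sqrt_kron {m n : Type*} [Fintype m] [Fintype n] [DecidableEq m] [DecidableEq n]
    {P : Matrix m m ℂ} {Q : Matrix n n ℂ} (hP : P.PosSemidef) (hQ : Q.PosSemidef) :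
    (psd_kron_s10 hP hQ).sqrt = hP.sqrt ⊗ₖ hQ.sqrt := by
  refine ((psd_kron_s10 hP.posSemidef_sqrt hQ.posSemidef_sqrt).eq_sqrt_of_sq_eq _ ?_).symm
  rw [pow_two, ← mul_kronecker_mul, hP.sqrt_mul_self, hQ.sqrt_mul_self]

lemma traceNorm_kron {m n : Type*} [Fintype m] [Fintype n] [DecidableEq m] [DecidableEq n]
    (M : Matrix m m ℂ) (N : Matrix n n ℂ) :
    traceNorm (M ⊗ₖ N) = traceNorm M * traceNorm N := by
  have h : (M ⊗ₖ N)ᴴ * (M ⊗ₖ N) = (Mᴴ * M) ⊗ₖ (Nᴴ * N) := by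
    rw [conjTranspose_kron, mul_kronecker_mul]
  have hM := Matrix.posSemidef_conjTranspose_mul_self M
  have hN := Matrix.posSemidef_conjTranspose_mul_self N
  have hMN : ((M ⊗ₖ N)ᴴ * (M ⊗ₖ N)).PosSemidef := Matrix.posSemidef_conjTranspose_mul_self _
  have hs : hMN.sqrt = hM.sqrt ⊗ₖ hN.sqrt := by
    refine ((psd_kron_s10 hM.posSemidef_sqrt hN.posSemidef_sqrt).eq_sqrt_of_sq_eq _ ?_).symm
    rw [pow_two, ← mul_kronecker_mul, hM.sqrt_mul_self, hN.sqrt_mul_self, h]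
  rw [traceNorm_eq, traceNorm_eq, traceNorm_eq]
  rw [show (Matrix.posSemidef_conjTranspose_mul_self (M ⊗ₖ N)).sqrt = hMN.sqrt from rfl, hs,
    trace_kronecker, trace_sqrt hM, trace_sqrt hN]
  push_cast
  simp

lemma traceNorm_reindex {m n : Type*} [Fintype m] [Fintype n] [DecidableEq m] [DecidableEq n]
    (e : m ≃ n) (M : Matrix m m ℂ) :
    traceNorm (Matrix.reindex e e M) = traceNorm M := by
  have h : (Matrix.reindex e e M)ᴴ * (Matrix.reindex e e M)
      = Matrix.reindex e e (Mᴴ * M) := by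
    simp only [reindex_apply, conjTranspose_submatrix]
    rw [Matrix.submatrix_mul_equiv]
  have hM := Matrix.posSemidef_conjTranspose_mul_self M
  have hr : ((Matrix.reindex e e M)ᴴ * (Matrix.reindex e e M)).PosSemidef :=
    Matrix.posSemidef_conjTranspose_mul_self _
  have hs : hr.sqrt = Matrix.reindex e e hM.sqrt := by
    refine ((hM.posSemidef_sqrt.submatrix e.symm).eq_sqrt_of_sq_eq _ ?_).symm
    rw [pow_two]
    simp only [reindex_apply]
    rw [Matrix.submatrix_mul_equiv, hM.sqrt_mul_self, conjTranspose_submatrix, Matrix.submatrix_mul_equiv]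
  rw [traceNorm_eq, traceNorm_eq,
    show (Matrix.posSemidef_conjTranspose_mul_self ((Matrix.reindex e e) M)).sqrt = hr.sqrt
      from rfl, hs]
  congr 1
  simp only [reindex_apply, Matrix.trace, Matrix.diag_apply, submatrix_apply]
  exact Equiv.sum_comp e.symm fun i => hM.sqrt i i

lemma partialTranspose_kron {A B A' B' : Type*}
    (τ₁ : Matrix (A × B) (A × B) ℂ) (τ₂ : Matrix (A' × B') (A' × B') ℂ) :
    partialTranspose (Matrix.reindex (Equiv.prodProdProdComm A B A' B')
        (Equiv.prodProdProdComm A B A' B') (τ₁ ⊗ₖ τ₂))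
      = Matrix.reindex (Equiv.prodProdProdComm A B A' B')
          (Equiv.prodProdProdComm A B A' B')
          (partialTranspose τ₁ ⊗ₖ partialTranspose τ₂) := by
  ext ⟨⟨a, a'⟩, ⟨b, b'⟩⟩ ⟨⟨c, c'⟩, ⟨d, d'⟩⟩
  rfl

end PPTaux

/-- the tensor product of two PPT' operators is PPT'. -/
theorem pptPrime_kron {A B A' B' : Type*}
    [Fintype A] [Fintype B] [Fintype A'] [Fintype B']
    [DecidableEq A] [DecidableEq B] [DecidableEq A'] [DecidableEq B']
    (τ₁ : Matrix (A × B) (A × B) ℂ) (τ₂ : Matrix (A' × B') (A' × B') ℂ)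
    (h₁ : τ₁ ∈ PPTprime A B) (h₂ : τ₂ ∈ PPTprime A' B') :
    Matrix.reindex (Equiv.prodProdProdComm A B A' B')
        (Equiv.prodProdProdComm A B A' B') (τ₁ ⊗ₖ τ₂) ∈
      PPTprime (A × A') (B × B') := by
  obtain ⟨h₁p, h₁t⟩ := h₁
  obtain ⟨h₂p, h₂t⟩ := h₂
  constructor
  · simpa only [reindex_apply] using (psd_kron_s10 h₁p h₂p).submatrix _
  · rw [partialTranspose_kron, traceNorm_reindex, traceNorm_kron]
    calc traceNorm (partialTranspose τ₁) * traceNorm (partialTranspose τ₂)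
        ≤ 1 * 1 := mul_le_mul h₁t h₂t (traceNorm_nonneg _) zero_le_one
      _ = 1 := one_mul 1
end

section
/- PPT-preserving maps preserve the set PPT': if P is a linear map on operators of H_A ⊗ H_B to operators of H_{A'} ⊗ H_{B'} such that T_{B'} ∘ P ∘ T_B is completely positive and trace preserving, then for every τ ∈ PPT'(A:B), P(τ) ∈ PPT'(A':B'). -/
open scoped Matrix Kronecker
open Matrix
open scoped ComplexOrder

section AuxProofs
open Polynomial
variable {n : Type*} [Fintype n] [DecidableEq n]

private lemma aux_det_conj (V : Matrix n n ℂ) (hV : V * Vᴴ = 1) (d : n → ℝ) (t : ℂ) :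
    det (t • (1 : Matrix n n ℂ) - V * diagonal (fun i => (d i : ℂ)) * Vᴴ) =
      ∏ i, (t - (d i : ℂ)) := by
  have h1 : t • (1 : Matrix n n ℂ) = V * (t • (1 : Matrix n n ℂ)) * Vᴴ := by
    rw [Matrix.mul_smul, mul_one, Matrix.smul_mul, hV]
  rw [h1, ← Matrix.sub_mul, ← Matrix.mul_sub, det_mul, det_mul, mul_comm (det V),
    mul_assoc, ← det_mul, hV, det_one, mul_one]
  have h2 : t • (1 : Matrix n n ℂ) - diagonal (fun i => (d i : ℂ)) =
      diagonal (fun i => t - (d i : ℂ)) := by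
    rw [← diagonal_one, ← diagonal_smul, diagonal_sub]
    funext i; simp
  rw [h2, det_diagonal]

private lemma sum_eigen_eq {M : Matrix n n ℂ} (hM : M.IsHermitian) (V : Matrix n n ℂ)
    (hV : V * Vᴴ = 1) (d : n → ℝ)
    (hMd : M = V * diagonal (fun i => (d i : ℂ)) * Vᴴ) (f : ℝ → ℝ) :
    ∑ i, f (hM.eigenvalues i) = ∑ i, f (d i) := by
  set U : Matrix n n ℂ := (hM.eigenvectorUnitary : Matrix n n ℂ) with hU
  have hUU : U * Uᴴ = 1 := by
    rw [← star_eq_conjTranspose]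
    exact (Matrix.mem_unitaryGroup_iff).mp hM.eigenvectorUnitary.2
  have hspec : M = U * diagonal (fun i => ((hM.eigenvalues i : ℝ) : ℂ)) * Uᴴ := by
    have := hM.spectral_theorem
    rwa [Unitary.conjStarAlgAut_apply, star_eq_conjTranspose] at this
  have hpq : (∏ i, (X - C ((hM.eigenvalues i : ℂ)))) = ∏ i, (X - C ((d i : ℂ))) := by
    apply Polynomial.funext
    intro t
    simp only [eval_prod, eval_sub, eval_X, eval_C]
    rw [← aux_det_conj U hUU hM.eigenvalues t, ← aux_det_conj V hV d t, ← hspec, ← hMd]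
  have e1 : ∀ g : n → ℝ, Multiset.map (fun i => X - C ((g i : ℂ))) Finset.univ.val =
      (Finset.univ.val.map fun i => ((g i : ℂ))).map (fun a : ℂ => X - C a) := by
    intro g; rw [Multiset.map_map]; rfl
  have hroots : (Finset.univ.val.map fun i => ((hM.eigenvalues i : ℂ))) =
      (Finset.univ.val.map fun i => ((d i : ℂ))) := by
    have h1 := congrArg Polynomial.roots hpq
    rwa [Finset.prod_eq_multiset_prod, Finset.prod_eq_multiset_prod, e1, e1,
      Polynomial.roots_multiset_prod_X_sub_C, Polynomial.roots_multiset_prod_X_sub_C] at h1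
  have e2 : ∀ g : n → ℝ, ((Finset.univ.val.map fun i => ((g i : ℂ))).map
      (fun z : ℂ => f z.re)).sum = ∑ i, f (g i) := by
    intro g; rw [Multiset.map_map]
    rfl
  have h2 := congrArg (fun s : Multiset ℂ => (s.map (fun z : ℂ => f z.re)).sum) hroots
  simpa only [e2] using h2

/-- trace norm of a Hermitian matrix is the sum of the absolute values of eigenvalues -/
private lemma traceNorm_hermitian {M : Matrix n n ℂ} (hM : M.IsHermitian) :
    traceNorm M = ∑ i, |hM.eigenvalues i| := by
  set U : Matrix n n ℂ := (hM.eigenvectorUnitary : Matrix n n ℂ) with hU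
  have hUU : U * Uᴴ = 1 := by
    rw [← star_eq_conjTranspose]
    exact (Matrix.mem_unitaryGroup_iff).mp hM.eigenvectorUnitary.2
  have hU'U : Uᴴ * U = 1 := by
    rw [← star_eq_conjTranspose]
    exact (Matrix.mem_unitaryGroup_iff').mp hM.eigenvectorUnitary.2
  have hspec : M = U * diagonal (fun i => ((hM.eigenvalues i : ℝ) : ℂ)) * Uᴴ := by
    have := hM.spectral_theorem
    rwa [Unitary.conjStarAlgAut_apply, star_eq_conjTranspose] at this
  have hdecomp : Mᴴ * M = U * diagonal (fun i => (((hM.eigenvalues i) ^ 2 : ℝ) : ℂ)) * Uᴴ := by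
    conv_lhs => rw [hM.eq, hspec]
    have : diagonal (fun i => ((hM.eigenvalues i : ℝ) : ℂ)) * (Uᴴ * U) *
        diagonal (fun i => ((hM.eigenvalues i : ℝ) : ℂ)) =
        diagonal (fun i => (((hM.eigenvalues i) ^ 2 : ℝ) : ℂ)) := by
      rw [hU'U, mul_one, diagonal_mul_diagonal]
      congr 1; funext i; push_cast; ring
    calc (U * diagonal (fun i => ((hM.eigenvalues i : ℝ) : ℂ)) * Uᴴ) *
          (U * diagonal (fun i => ((hM.eigenvalues i : ℝ) : ℂ)) * Uᴴ)
        = U * (diagonal (fun i => ((hM.eigenvalues i : ℝ) : ℂ)) * (Uᴴ * U) *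
            diagonal (fun i => ((hM.eigenvalues i : ℝ) : ℂ))) * Uᴴ := by
          simp only [Matrix.mul_assoc]
      _ = U * diagonal (fun i => (((hM.eigenvalues i) ^ 2 : ℝ) : ℂ)) * Uᴴ := by rw [this]
  unfold traceNorm
  rw [sum_eigen_eq (Matrix.isHermitian_conjTranspose_mul_self M) U hUU _ hdecomp Real.sqrt]
  exact Finset.sum_congr rfl fun i _ => Real.sqrt_sq_eq_abs _

/-- trace of a PSD matrix is a nonnegative (real) number -/
private lemma psd_trace_nonneg {M : Matrix n n ℂ} (hM : M.PosSemidef) : 0 ≤ M.trace := by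
  rw [Matrix.trace]
  apply Finset.sum_nonneg
  intro i _
  have h := hM.dotProduct_mulVec_nonneg (Pi.single i 1)
  have e : dotProduct (star (Pi.single i 1)) (M *ᵥ Pi.single i 1) = M.diag i := by
    simp [dotProduct, Matrix.mulVec, Pi.single_apply, Matrix.diag, mul_ite, ite_mul,
      apply_ite (star : ℂ → ℂ), Finset.sum_ite_eq', Finset.sum_ite_eq]
  rwa [e] at h

private lemma trace_mul_psd_nonneg {P Q : Matrix n n ℂ} (hP : P.PosSemidef)
    (hQ : Q.PosSemidef) : 0 ≤ (P * Q).trace := by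
  obtain ⟨C, rfl⟩ : ∃ C : Matrix n n ℂ, Q = Cᴴ * C := by
    open scoped MatrixOrder in exact CStarAlgebra.nonneg_iff_eq_star_mul_self.mp hQ.nonneg
  have : (P * (Cᴴ * C)).trace = (C * P * Cᴴ).trace := by
    rw [← Matrix.mul_assoc, Matrix.trace_mul_cycle, Matrix.mul_assoc]
  rw [this]
  exact psd_trace_nonneg (hP.mul_mul_conjTranspose_same C)

end AuxProofs

section AuxProofs2
variable {n : Type*} [Fintype n] [DecidableEq n]

private lemma conj_diag_psd (U : Matrix n n ℂ) {c : n → ℝ} (hc : ∀ i, 0 ≤ c i) :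
    (U * Matrix.diagonal (fun i => (c i : ℂ)) * Uᴴ).PosSemidef := by
  refine Matrix.PosSemidef.mul_mul_conjTranspose_same ?_ U
  refine Matrix.PosSemidef.diagonal ?_
  intro i
  simpa using Complex.zero_le_real.mpr (hc i)

/-- trace norm of a difference of PSD matrices is bounded by the sum of traces. -/
private lemma traceNorm_sub_le {Y Z : Matrix n n ℂ} (hY : Y.PosSemidef) (hZ : Z.PosSemidef) :
    traceNorm (Y - Z) ≤ (Y.trace + Z.trace).re := by
  have hW : (Y - Z).IsHermitian := hY.1.sub hZ.1
  set lam := hW.eigenvalues with hlam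
  set U : Matrix n n ℂ := (hW.eigenvectorUnitary : Matrix n n ℂ) with hU
  have hUU : U * Uᴴ = 1 := by
    rw [← star_eq_conjTranspose]
    exact (Matrix.mem_unitaryGroup_iff).mp hW.eigenvectorUnitary.2
  have hU'U : Uᴴ * U = 1 := by
    rw [← star_eq_conjTranspose]
    exact (Matrix.mem_unitaryGroup_iff').mp hW.eigenvectorUnitary.2
  have hspec : Y - Z = U * Matrix.diagonal (fun i => ((lam i : ℝ) : ℂ)) * Uᴴ := by
    have := hW.spectral_theorem
    rwa [Unitary.conjStarAlgAut_apply, star_eq_conjTranspose] at this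
  set s : n → ℝ := fun i => if 0 ≤ lam i then 1 else -1 with hs
  set S : Matrix n n ℂ := U * Matrix.diagonal (fun i => (s i : ℂ)) * Uᴴ with hS
  -- trace of S * (Y - Z) is the sum of |lam i|
  have hSW : (S * (Y - Z)).trace = ((∑ i, |lam i| : ℝ) : ℂ) := by
    rw [hspec, hS]
    have : (U * Matrix.diagonal (fun i => (s i : ℂ)) * Uᴴ) *
        (U * Matrix.diagonal (fun i => ((lam i : ℝ) : ℂ)) * Uᴴ) =
        U * Matrix.diagonal (fun i => ((s i * lam i : ℝ) : ℂ)) * Uᴴ := by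
      calc (U * Matrix.diagonal (fun i => (s i : ℂ)) * Uᴴ) *
            (U * Matrix.diagonal (fun i => ((lam i : ℝ) : ℂ)) * Uᴴ)
          = U * (Matrix.diagonal (fun i => (s i : ℂ)) * (Uᴴ * U) *
              Matrix.diagonal (fun i => ((lam i : ℝ) : ℂ))) * Uᴴ := by
            simp only [Matrix.mul_assoc]
        _ = _ := by
            rw [hU'U, mul_one, Matrix.diagonal_mul_diagonal]
            congr 2; funext i; push_cast; ring
    rw [this, Matrix.trace_mul_cycle, hU'U, one_mul, Matrix.trace_diagonal]
    push_cast
    refine Finset.sum_congr rfl fun i _ => ?_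
    by_cases h : 0 ≤ lam i
    · simp [hs, h, abs_of_nonneg h]
    · simp [hs, h, abs_of_neg (lt_of_not_ge h)]
  -- 1 - S and 1 + S are PSD
  have hone : (1 : Matrix n n ℂ) = U * Matrix.diagonal (fun _ : n => ((1 : ℝ) : ℂ)) * Uᴴ := by
    simp only [Complex.ofReal_one, Matrix.diagonal_one, mul_one, hUU]
  have honesub : ((1 : Matrix n n ℂ) - S).PosSemidef := by
    have : (1 : Matrix n n ℂ) - S = U * Matrix.diagonal (fun i => ((1 - s i : ℝ) : ℂ)) * Uᴴ := by
      rw [hS]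
      conv_lhs => rw [hone]
      rw [← Matrix.sub_mul, ← Matrix.mul_sub, Matrix.diagonal_sub]
      congr 2; funext i; push_cast; ring
    rw [this]
    refine conj_diag_psd U fun i => ?_
    rw [hs]; by_cases h : 0 ≤ lam i <;> simp [h]
  have honeadd : ((1 : Matrix n n ℂ) + S).PosSemidef := by
    have : (1 : Matrix n n ℂ) + S = U * Matrix.diagonal (fun i => ((1 + s i : ℝ) : ℂ)) * Uᴴ := by
      rw [hS]
      conv_lhs => rw [hone]
      rw [← Matrix.add_mul, ← Matrix.mul_add, Matrix.diagonal_add]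
      congr 2; funext i; push_cast; ring
    rw [this]
    refine conj_diag_psd U fun i => ?_
    rw [hs]; by_cases h : 0 ≤ lam i <;> simp [h]
  -- the two trace bounds
  have hb1 : 0 ≤ (((1 : Matrix n n ℂ) - S) * Y).trace := trace_mul_psd_nonneg honesub hY
  have hb2 : 0 ≤ (((1 : Matrix n n ℂ) + S) * Z).trace := trace_mul_psd_nonneg honeadd hZ
  rw [Matrix.sub_mul, Matrix.trace_sub, one_mul] at hb1
  rw [Matrix.add_mul, Matrix.trace_add, one_mul] at hb2
  have hb1' : (S * Y).trace.re ≤ Y.trace.re := by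
    have := (Complex.le_def.mp hb1).1
    simp only [Complex.zero_re, Complex.sub_re] at this
    linarith
  have hb2' : -(S * Z).trace.re ≤ Z.trace.re := by
    have := (Complex.le_def.mp hb2).1
    simp only [Complex.zero_re, Complex.add_re] at this
    linarith
  have hmain : traceNorm (Y - Z) = (S * (Y - Z)).trace.re := by
    rw [hSW, traceNorm_hermitian hW, Complex.ofReal_re]
  rw [hmain, Matrix.mul_sub, Matrix.trace_sub, Complex.sub_re]
  have h1 := Complex.add_re Y.trace Z.trace
  linarith

end AuxProofs2

section MainAux

private lemma partialTranspose_partialTranspose {A B : Type*}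
    (M : Matrix (A × B) (A × B) ℂ) : partialTranspose (partialTranspose M) = M := rfl

private lemma partialTranspose_isHermitian {A B : Type*} {M : Matrix (A × B) (A × B) ℂ}
    (hM : M.IsHermitian) : (partialTranspose M).IsHermitian := by
  funext p q
  have := congrFun (congrFun hM.eq (p.1, q.2)) (q.1, p.2)
  simpa [partialTranspose, Matrix.conjTranspose_apply] using this

private lemma pos_of_CP {A B : Type*} [Fintype A] [Fintype B] [DecidableEq A]
    {N : Matrix A A ℂ → Matrix B B ℂ} (h : IsCompletelyPositive N) :
    ∀ M, M.PosSemidef → (N M).PosSemidef := by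
  intro M hM
  have h1 := h (Fin 1) (M.submatrix Prod.snd Prod.snd) (hM.submatrix _)
  have h2 : N M = (chanExt N (M.submatrix Prod.snd Prod.snd)).submatrix
      (fun b : B => ((0 : Fin 1), b)) (fun b : B => ((0 : Fin 1), b)) := rfl
  rw [h2]
  exact h1.submatrix _

end MainAux

/-- PPT-preserving maps preserve the set PPT'. -/
theorem pptPreserving_maps_pptPrime {A B A' B' : Type*}
    [Fintype A] [Fintype B] [Fintype A'] [Fintype B']
    [DecidableEq A] [DecidableEq B] [DecidableEq A'] [DecidableEq B']
    (P : Matrix (A × B) (A × B) ℂ → Matrix (A' × B') (A' × B') ℂ)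
    (hPos : ∀ M, M.PosSemidef → (P M).PosSemidef)
    (hPPT : IsChannel (fun M => partialTranspose (P (partialTranspose M))))
    (τ : Matrix (A × B) (A × B) ℂ) (hτ : τ ∈ PPTprime A B) :
    P τ ∈ PPTprime A' B' := by
  obtain ⟨hτpos, hτnorm⟩ := hτ
  obtain ⟨hlin, hCP, hTP⟩ := hPPT
  set Φ : Matrix (A × B) (A × B) ℂ → Matrix (A' × B') (A' × B') ℂ :=
    fun M => partialTranspose (P (partialTranspose M)) with hΦ
  have hΦpos : ∀ M, M.PosSemidef → (Φ M).PosSemidef := pos_of_CP hCP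
  refine ⟨hPos τ hτpos, ?_⟩
  -- the partial transpose of τ and its Jordan decomposition
  set X := partialTranspose τ with hXdef
  have hX : X.IsHermitian := partialTranspose_isHermitian hτpos.1
  set lam := hX.eigenvalues with hlam
  set U : Matrix (A × B) (A × B) ℂ := (hX.eigenvectorUnitary : Matrix (A × B) (A × B) ℂ)
    with hU
  have hUU : U * Uᴴ = 1 := by
    rw [← star_eq_conjTranspose]
    exact (Matrix.mem_unitaryGroup_iff).mp hX.eigenvectorUnitary.2
  have hU'U : Uᴴ * U = 1 := by
    rw [← star_eq_conjTranspose]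
    exact (Matrix.mem_unitaryGroup_iff').mp hX.eigenvectorUnitary.2
  have hspec : X = U * Matrix.diagonal (fun i => ((lam i : ℝ) : ℂ)) * Uᴴ := by
    have := hX.spectral_theorem
    rwa [Unitary.conjStarAlgAut_apply, star_eq_conjTranspose] at this
  set Xp : Matrix (A × B) (A × B) ℂ :=
    U * Matrix.diagonal (fun i => ((max (lam i) 0 : ℝ) : ℂ)) * Uᴴ with hXp
  set Xm : Matrix (A × B) (A × B) ℂ :=
    U * Matrix.diagonal (fun i => ((max (-lam i) 0 : ℝ) : ℂ)) * Uᴴ with hXm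
  have hXppos : Xp.PosSemidef := conj_diag_psd U fun i => le_max_right _ _
  have hXmpos : Xm.PosSemidef := conj_diag_psd U fun i => le_max_right _ _
  have hsub : Xp - Xm = X := by
    rw [hXp, hXm, hspec, ← Matrix.sub_mul, ← Matrix.mul_sub, Matrix.diagonal_sub]
    have hd : (fun i => ((max (lam i) 0 : ℝ) : ℂ) - ((max (-lam i) 0 : ℝ) : ℂ)) =
        (fun i => ((lam i : ℝ) : ℂ)) := by
      funext i
      rw [← Complex.ofReal_sub]
      congr 1
      rcases le_or_gt 0 (lam i) with h | h
      · rw [max_eq_left h, max_eq_right (by linarith), sub_zero]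
      · rw [max_eq_right h.le, max_eq_left (by linarith), zero_sub, neg_neg]
    rw [hd]
  -- traces of the Jordan parts
  have trace_conj : ∀ c : (A × B) → ℝ,
      (U * Matrix.diagonal (fun i => ((c i : ℝ) : ℂ)) * Uᴴ).trace = ((∑ i, c i : ℝ) : ℂ) := by
    intro c
    rw [Matrix.trace_mul_cycle, hU'U, one_mul, Matrix.trace_diagonal]
    push_cast; rfl
  -- linearity: Φ X = Φ Xp - Φ Xm
  have hlinsub : Φ X = Φ Xp - Φ Xm := by
    have h1 := hlin (-1 : ℂ) Xm Xp
    rw [neg_one_smul, neg_one_smul, ← sub_eq_neg_add, ← sub_eq_neg_add, hsub] at h1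
    exact h1
  -- the key bound
  have key : traceNorm (Φ X) ≤ traceNorm X := by
    rw [hlinsub]
    refine le_trans (traceNorm_sub_le (hΦpos _ hXppos) (hΦpos _ hXmpos)) ?_
    rw [hTP Xp, hTP Xm, hXp, hXm, trace_conj, trace_conj, traceNorm_hermitian hX,
      ← Complex.ofReal_add, Complex.ofReal_re, ← Finset.sum_add_distrib]
    refine le_of_eq (Finset.sum_congr rfl fun i _ => ?_)
    rcases le_or_gt 0 (lam i) with h | h
    · rw [max_eq_left h, max_eq_right (by linarith), add_zero, abs_of_nonneg h]
    · rw [max_eq_right h.le, max_eq_left (by linarith), zero_add, abs_of_neg h]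
  have hfinal : partialTranspose (P τ) = Φ X := by
    rw [hΦ, hXdef]
    simp only [partialTranspose_partialTranspose]
  rw [hfinal]
  exact le_trans key hτnorm
end

section
/- Rains information upper bound for the qudit erasure channel: for the erasure channel N_p(ρ) = (1−p)ρ + p|e⟩⟨e| with erasure probability p ∈ [0,1] on input dimension d = |A|, the Rains information satisfies R(N_p) ≤ (1−p) log d. Specifically, with Φ the maximally entangled input and τ_{RB} = Σ_x (1/d)|x⟩⟨x|_R ⊗ N_p(|x⟩⟨x|_A) (which is in PPT'), D(N_p(Φ_{RA})‖τ_{RB}) = (1−p) log d, using H(τ_{RB}) = log d + h₂(p) and H(N_p(Φ_{RA})) = h₂(p) + p log d. -/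
open scoped Matrix Kronecker
open Matrix
open scoped ComplexOrder

noncomputable section

/-- The qudit erasure channel with erasure probability `p`, with erasure flag
given by the extra `Unit` dimension. -/
noncomputable def erasureChannel {A : Type*} [Fintype A] (p : ℝ)
    (ρ : Matrix A A ℂ) : Matrix (A ⊕ Unit) (A ⊕ Unit) ℂ :=
  ((1 - p : ℝ) : ℂ) • Matrix.fromBlocks ρ 0 0 0 +
    ((p : ℂ) * ρ.trace) • Matrix.fromBlocks 0 0 0 (1 : Matrix Unit Unit ℂ)

/-- The maximally entangled input state `Φ_{RA}` with `R ≃ A`. -/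
noncomputable def maxEntIn (A : Type*) [Fintype A] [DecidableEq A] :
    Matrix (A × A) (A × A) ℂ :=
  Matrix.of fun x y =>
    if x.1 = x.2 ∧ y.1 = y.2 then ((Fintype.card A : ℂ))⁻¹ else 0

/-- The classically correlated operator `τ_{RB} = Σ_x (1/d)|x⟩⟨x|_R ⊗ N_p(|x⟩⟨x|)`. -/
noncomputable def erasureTau (A : Type*) [Fintype A] [DecidableEq A] (p : ℝ) :
    Matrix (A × (A ⊕ Unit)) (A × (A ⊕ Unit)) ℂ :=
  Matrix.of fun pr q =>
    if pr.1 = q.1 then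
      ((Fintype.card A : ℂ))⁻¹ *
        (erasureChannel p (Matrix.single pr.1 pr.1 (1 : ℂ))) pr.2 q.2
    else 0

set_option linter.unusedSectionVars false

namespace RainsAux

open Polynomial Matrix

variable {n : Type*} [Fintype n] [DecidableEq n]

/-- diagonal matrix with real entries -/
def cdiag (w : n → ℝ) : Matrix n n ℂ := Matrix.diagonal fun i => (w i : ℂ)

lemma cdiag_conjTranspose (w : n → ℝ) : (cdiag w)ᴴ = cdiag w := by
  simp [cdiag, Matrix.diagonal_conjTranspose]

lemma cdiag_mul_cdiag (a b : n → ℝ) : cdiag a * cdiag b = cdiag (fun i => a i * b i) := by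
  simp [cdiag, Matrix.diagonal_mul_diagonal]

lemma conj_pow (V X : Matrix n n ℂ) (h1 : Vᴴ * V = 1) (h2 : V * Vᴴ = 1) (k : ℕ) :
    (V * X * Vᴴ) ^ k = V * X ^ k * Vᴴ := by
  induction k with
  | zero => simp [h2]
  | succ k ih =>
      rw [pow_succ, ih, pow_succ]
      calc V * X ^ k * Vᴴ * (V * X * Vᴴ) = V * X ^ k * (Vᴴ * V) * X * Vᴴ := by
            simp only [Matrix.mul_assoc]
        _ = V * (X ^ k * X) * Vᴴ := by
            rw [h1]; simp only [Matrix.mul_assoc, Matrix.mul_one, Matrix.one_mul]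

lemma aeval_conj (q : ℝ[X]) (V X : Matrix n n ℂ) (h1 : Vᴴ * V = 1) (h2 : V * Vᴴ = 1) :
    aeval (V * X * Vᴴ) q = V * aeval X q * Vᴴ := by
  induction q using Polynomial.induction_on' with
  | add p q hp hq => simp [map_add, hp, hq, Matrix.mul_add, Matrix.add_mul]
  | monomial k a =>
      rw [aeval_monomial, aeval_monomial, conj_pow V X h1 h2, Algebra.algebraMap_eq_smul_one]
      simp [smul_mul_assoc, mul_smul_comm]

lemma aeval_cdiag (q : ℝ[X]) (w : n → ℝ) :
    aeval (cdiag w) q = cdiag (fun i => q.eval (w i)) := by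
  have h : cdiag w = Matrix.diagonalAlgHom ℝ (fun i => ((w i : ℂ))) := rfl
  rw [h, aeval_algHom_apply]
  have key : ∀ i, (aeval (fun i => ((w i : ℝ) : ℂ)) q) i = ((q.eval (w i) : ℝ) : ℂ) := by
    intro i
    calc (aeval (fun i => ((w i : ℝ) : ℂ)) q) i
        = aeval ((w i : ℝ) : ℂ) q :=
          (aeval_algHom_apply (Pi.evalAlgHom ℝ (fun _ => ℂ) i)
            (fun j => ((w j : ℝ) : ℂ)) q).symm
      _ = ((q.eval (w i) : ℝ) : ℂ) := by
          rw [show ((w i : ℝ) : ℂ) = algebraMap ℝ ℂ (w i) from rfl,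
            aeval_algebraMap_apply_eq_algebraMap_eval]
          rfl
  rw [funext key]
  rfl

end RainsAux
namespace RainsAux

open Polynomial Matrix

variable {n : Type*} [Fintype n] [DecidableEq n]

lemma unitary_facts {V : Matrix n n ℂ} (hV : V ∈ Matrix.unitaryGroup n ℂ) :
    Vᴴ * V = 1 ∧ V * Vᴴ = 1 := by
  constructor
  · rw [← Matrix.star_eq_conjTranspose]
    exact Matrix.mem_unitaryGroup_iff'.mp hV
  · rw [← Matrix.star_eq_conjTranspose]
    exact Matrix.mem_unitaryGroup_iff.mp hV

lemma isHermitian_conj_cdiag {V : Matrix n n ℂ} (hV : V ∈ Matrix.unitaryGroup n ℂ) (w : n → ℝ) :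
    (V * cdiag w * Vᴴ).IsHermitian := by
  unfold Matrix.IsHermitian
  rw [Matrix.conjTranspose_mul, Matrix.conjTranspose_mul, Matrix.conjTranspose_conjTranspose,
    cdiag_conjTranspose, Matrix.mul_assoc]

lemma spectral' {M : Matrix n n ℂ} (hM : M.IsHermitian) :
    M = (hM.eigenvectorUnitary : Matrix n n ℂ) * cdiag hM.eigenvalues
        * (hM.eigenvectorUnitary : Matrix n n ℂ)ᴴ := by
  conv_lhs => rw [hM.spectral_theorem]
  rw [Unitary.conjStarAlgAut_apply]
  rfl

/-- Invariance of the matrix functional calculus. -/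
lemma matFun_conj (f : ℝ → ℝ) {V : Matrix n n ℂ} (hV : V ∈ Matrix.unitaryGroup n ℂ) (w : n → ℝ) :
    matFun f (V * cdiag w * Vᴴ) = V * cdiag (fun i => f (w i)) * Vᴴ := by
  obtain ⟨hV1, hV2⟩ := unitary_facts hV
  set M := V * cdiag w * Vᴴ with hMdef
  have hM : M.IsHermitian := isHermitian_conj_cdiag hV w
  rw [matFun, dif_pos hM]
  set U : Matrix n n ℂ := (hM.eigenvectorUnitary : Matrix n n ℂ) with hUdef
  have hU : U ∈ Matrix.unitaryGroup n ℂ := SetLike.coe_mem _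
  obtain ⟨hU1, hU2⟩ := unitary_facts hU
  set S : Finset ℝ := (Finset.univ.image hM.eigenvalues) ∪ (Finset.univ.image w) with hS
  set q : ℝ[X] := Lagrange.interpolate S id f with hq
  have hqe : ∀ x ∈ S, q.eval x = f x := by
    intro x hx
    have := Lagrange.eval_interpolate_at_node f (Set.injOn_id _) hx
    simpa [hq] using this
  have key : ∀ (W : Matrix n n ℂ), W ∈ Matrix.unitaryGroup n ℂ → ∀ u : n → ℝ,
      (∀ i, u i ∈ S) → W * cdiag (fun i => f (u i)) * Wᴴ = aeval (W * cdiag u * Wᴴ) q := by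
    intro W hW u hu
    obtain ⟨hW1, hW2⟩ := unitary_facts hW
    rw [aeval_conj q W _ hW1 hW2, aeval_cdiag]
    rw [show (fun i => f (u i)) = (fun i => q.eval (u i)) from funext fun i => (hqe _ (hu i)).symm]
  have e1 : (hM.eigenvectorUnitary : Matrix n n ℂ) *
      Matrix.diagonal (fun i => ((f (hM.eigenvalues i) : ℝ) : ℂ)) *
      (hM.eigenvectorUnitary : Matrix n n ℂ)ᴴ = aeval M q := by
    have := key U hU hM.eigenvalues (fun i => by
      simp [hS, Finset.mem_union])
    rw [show (Matrix.diagonal (fun i => ((f (hM.eigenvalues i) : ℝ) : ℂ)))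
        = cdiag (fun i => f (hM.eigenvalues i)) from rfl]
    rw [this, ← spectral' hM]
  have e2 : aeval M q = V * cdiag (fun i => f (w i)) * Vᴴ := by
    rw [hMdef, ← key V hV w (fun i => by simp [hS, Finset.mem_union])]
  rw [e1, e2]

/-- Trace of a unitary conjugation. -/
lemma trace_conj {V : Matrix n n ℂ} (hV : V ∈ Matrix.unitaryGroup n ℂ) (D : Matrix n n ℂ) :
    (V * D * Vᴴ).trace = D.trace := by
  obtain ⟨hV1, hV2⟩ := unitary_facts hV
  rw [Matrix.trace_mul_cycle, hV1, Matrix.one_mul]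

lemma conj_mul_conj {V : Matrix n n ℂ} (hV : V ∈ Matrix.unitaryGroup n ℂ)
    (D E : Matrix n n ℂ) : (V * D * Vᴴ) * (V * E * Vᴴ) = V * (D * E) * Vᴴ := by
  obtain ⟨hV1, hV2⟩ := unitary_facts hV
  calc (V * D * Vᴴ) * (V * E * Vᴴ) = V * D * (Vᴴ * V) * E * Vᴴ := by
        simp only [Matrix.mul_assoc]
    _ = V * (D * E) * Vᴴ := by rw [hV1]; simp only [Matrix.mul_assoc, Matrix.mul_one]

lemma re_trace_cdiag (w : n → ℝ) : ((cdiag w).trace).re = ∑ i, w i := by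
  rw [cdiag, Matrix.trace_diagonal]
  rw [Complex.re_sum]
  simp

/-- Sums of functions of eigenvalues can be computed from any unitary diagonalization. -/
lemma eigsum (g : ℝ → ℝ) {V : Matrix n n ℂ} (hV : V ∈ Matrix.unitaryGroup n ℂ) (w : n → ℝ)
    (hM : (V * cdiag w * Vᴴ).IsHermitian) :
    ∑ i, g (hM.eigenvalues i) = ∑ i, g (w i) := by
  have h1 := matFun_conj g hV w
  have h2 : matFun g (V * cdiag w * Vᴴ) = (hM.eigenvectorUnitary : Matrix n n ℂ)
      * cdiag (fun i => g (hM.eigenvalues i)) * (hM.eigenvectorUnitary : Matrix n n ℂ)ᴴ := by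
    rw [matFun, dif_pos hM]; rfl
  have := h2.symm.trans h1
  have t1 := congrArg (fun X => (Matrix.trace X).re) this
  simpa [trace_conj (SetLike.coe_mem hM.eigenvectorUnitary), trace_conj hV,
    re_trace_cdiag] using t1

lemma eig_congr {X Y : Matrix n n ℂ} (hXY : X = Y) (hX : X.IsHermitian) (hY : Y.IsHermitian)
    (g : ℝ → ℝ) : ∑ i, g (hX.eigenvalues i) = ∑ i, g (hY.eigenvalues i) := by
  subst hXY; rfl

/-- Trace norm via an explicit diagonalization. -/
lemma traceNorm_conj {V : Matrix n n ℂ} (hV : V ∈ Matrix.unitaryGroup n ℂ) (w : n → ℝ) :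
    traceNorm (V * cdiag w * Vᴴ) = ∑ i, |w i| := by
  obtain ⟨hV1, hV2⟩ := unitary_facts hV
  set M := V * cdiag w * Vᴴ with hMdef
  have hMM : Mᴴ * M = V * cdiag (fun i => w i ^ 2) * Vᴴ := by
    have hM : M.IsHermitian := isHermitian_conj_cdiag hV w
    rw [hM.eq]
    rw [hMdef, conj_mul_conj hV, cdiag_mul_cdiag]
    congr 1
    funext i
    ring
  rw [traceNorm]
  rw [eig_congr hMM (Matrix.isHermitian_conjTranspose_mul_self M)
    (isHermitian_conj_cdiag hV _) Real.sqrt]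
  rw [eigsum Real.sqrt hV _ (isHermitian_conj_cdiag hV _)]
  congr 1
  funext i
  rw [Real.sqrt_sq_eq_abs]

end RainsAux
namespace RainsAux

open Polynomial Matrix

variable {n : Type*} [Fintype n] [DecidableEq n]

lemma one_mem_unitary : (1 : Matrix n n ℂ) ∈ Matrix.unitaryGroup n ℂ := by
  rw [Matrix.mem_unitaryGroup_iff]; simp

lemma cdiag_sub' (a b : n → ℝ) : cdiag a - cdiag b = cdiag (fun i => a i - b i) := by
  unfold cdiag
  rw [Matrix.diagonal_sub]
  congr 1
  funext i
  push_cast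
  ring

lemma relEntropy_conj {V : Matrix n n ℂ} (hV : V ∈ Matrix.unitaryGroup n ℂ) (a b : n → ℝ) :
    relEntropy (V * cdiag a * Vᴴ) (V * cdiag b * Vᴴ) =
      ∑ i, a i * (Real.logb 2 (a i) - Real.logb 2 (b i)) := by
  rw [relEntropy, matFun_conj _ hV a, matFun_conj _ hV b]
  have hsub : V * cdiag (fun i => Real.logb 2 (a i)) * Vᴴ -
      V * cdiag (fun i => Real.logb 2 (b i)) * Vᴴ =
      V * cdiag (fun i => Real.logb 2 (a i) - Real.logb 2 (b i)) * Vᴴ := by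
    rw [← cdiag_sub', Matrix.mul_sub, Matrix.sub_mul]
  rw [hsub, conj_mul_conj hV, cdiag_mul_cdiag, trace_conj hV, re_trace_cdiag]

lemma matFun_cdiag (f : ℝ → ℝ) (w : n → ℝ) :
    matFun f (cdiag w) = cdiag (fun i => f (w i)) := by
  have h := matFun_conj f (one_mem_unitary (n := n)) w
  simpa using h

lemma re_trace_mul_cdiag (M : Matrix n n ℂ) (w : n → ℝ) :
    ((M * cdiag w).trace).re = ∑ i, (M i i).re * w i := by
  rw [cdiag, Matrix.trace]
  simp only [Matrix.diag_apply, Matrix.mul_diagonal, Complex.re_sum]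
  congr 1
  funext i
  simp [Complex.mul_re]

lemma relEntropy_eq_sub (ρ σ : Matrix n n ℂ) :
    relEntropy ρ σ = ((ρ * matFun (Real.logb 2) ρ).trace).re -
      ((ρ * matFun (Real.logb 2) σ).trace).re := by
  rw [relEntropy, Matrix.mul_sub, Matrix.trace_sub, Complex.sub_re]

lemma posSemidef_conj {V : Matrix n n ℂ} (hV : V ∈ Matrix.unitaryGroup n ℂ) {w : n → ℝ}
    (hw : ∀ i, 0 ≤ w i) : (V * cdiag w * Vᴴ).PosSemidef := by
  have hd : (cdiag w).PosSemidef := by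
    rw [cdiag]
    refine Matrix.posSemidef_diagonal_iff.mpr fun i => ?_
    simpa using Complex.zero_le_real.mpr (hw i)
  exact hd.mul_mul_conjTranspose_same V

lemma re_trace_eq_sum_eigenvalues {M : Matrix n n ℂ} (hM : M.IsHermitian) :
    (M.trace).re = ∑ i, hM.eigenvalues i := by
  conv_lhs => rw [spectral' hM]
  rw [trace_conj (SetLike.coe_mem _), re_trace_cdiag]

lemma cdiag_comp_equiv {J : Type*} [Fintype J] [DecidableEq J] (e : n ≃ J) (w : J → ℝ) :
    cdiag (w ∘ e) = (cdiag w).submatrix e e := by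
  ext i j
  by_cases h : i = j
  · subst h; simp [cdiag, Matrix.diagonal_apply]
  · have : e i ≠ e j := fun hc => h (e.injective hc)
    simp [cdiag, Matrix.diagonal_apply, h, this]

lemma cdiag_sum_elim {α β : Type*} [Fintype α] [DecidableEq α] [Fintype β] [DecidableEq β]
    (a : α → ℝ) (b : β → ℝ) :
    cdiag (Sum.elim a b) = Matrix.fromBlocks (cdiag a) 0 0 (cdiag b) := by
  have h : (fun i => ((Sum.elim a b i : ℝ) : ℂ)) =
      Sum.elim (fun i => ((a i : ℝ) : ℂ)) (fun i => ((b i : ℝ) : ℂ)) := by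
    funext i; cases i <;> rfl
  rw [cdiag, h, ← Matrix.fromBlocks_diagonal]
  rfl

lemma assemble {α β I : Type*} [Fintype α] [DecidableEq α] [Fintype β] [DecidableEq β]
    [Fintype I] [DecidableEq I] (e : I ≃ α ⊕ β)
    {V₁ : Matrix α α ℂ} (hV₁ : V₁ ∈ Matrix.unitaryGroup α ℂ)
    {V₂ : Matrix β β ℂ} (hV₂ : V₂ ∈ Matrix.unitaryGroup β ℂ) (a : α → ℝ) (b : β → ℝ) :
    ((Matrix.fromBlocks V₁ 0 0 V₂).submatrix e e) ∈ Matrix.unitaryGroup I ℂ ∧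
    ((Matrix.fromBlocks V₁ 0 0 V₂).submatrix e e) * cdiag (Sum.elim a b ∘ e) *
      ((Matrix.fromBlocks V₁ 0 0 V₂).submatrix e e)ᴴ =
      (Matrix.fromBlocks (V₁ * cdiag a * V₁ᴴ) 0 0 (V₂ * cdiag b * V₂ᴴ)).submatrix e e := by
  obtain ⟨h11, h12⟩ := unitary_facts hV₁
  obtain ⟨h21, h22⟩ := unitary_facts hV₂
  have hct : ((Matrix.fromBlocks V₁ 0 0 V₂).submatrix e e)ᴴ =
      (Matrix.fromBlocks V₁ᴴ 0 0 V₂ᴴ).submatrix e e := by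
    rw [Matrix.conjTranspose_submatrix, Matrix.fromBlocks_conjTranspose]
    simp
  constructor
  · rw [Matrix.mem_unitaryGroup_iff, Matrix.star_eq_conjTranspose, hct,
      Matrix.submatrix_mul_equiv, Matrix.fromBlocks_multiply]
    simp only [Matrix.mul_zero, Matrix.zero_mul, add_zero, zero_add, h12, h22]
    rw [Matrix.fromBlocks_one, Matrix.submatrix_one_equiv]
  · rw [hct, cdiag_comp_equiv e (Sum.elim a b), cdiag_sum_elim,
      Matrix.submatrix_mul_equiv, Matrix.submatrix_mul_equiv,
      Matrix.fromBlocks_multiply, Matrix.fromBlocks_multiply]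
    simp

end RainsAux
namespace RainsAux

open Polynomial Matrix

variable {A : Type*} [Fintype A] [DecidableEq A]

/-- diagonal vector of `erasureTau` -/
def dtau (A : Type*) [Fintype A] [DecidableEq A] (p : ℝ) : A × (A ⊕ Unit) → ℝ := fun i =>
  Sum.elim (fun y => if i.1 = y then (1 - p) / (Fintype.card A : ℝ) else 0)
    (fun _ => p / (Fintype.card A : ℝ)) i.2

lemma trace_stdBasis (x : A) : (Matrix.single x x (1 : ℂ)).trace = 1 := by
  simp [Matrix.trace, Matrix.diag, Matrix.single, Matrix.of_apply]

lemma erasureTau_eq (p : ℝ) : erasureTau A p = cdiag (dtau A p) := by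
  ext ⟨x, b⟩ ⟨y, b'⟩
  simp only [erasureTau, erasureChannel, cdiag, dtau, Matrix.of_apply, Matrix.add_apply,
    Matrix.smul_apply, trace_stdBasis, mul_one, Matrix.diagonal_apply, Prod.mk.injEq]
  rcases b with a | u <;> rcases b' with a' | u'
  · simp only [Matrix.fromBlocks_apply₁₁, Matrix.smul_apply, Matrix.zero_apply, smul_zero,
      add_zero, Sum.elim_inl, Sum.inl.injEq, Matrix.single, Matrix.of_apply]
    by_cases hxy : x = y <;> by_cases hxa : x = a <;> by_cases haa' : a = a' <;>
      simp_all <;> push_cast <;> try ring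
  · simp
  · simp
  · simp only [Matrix.fromBlocks_apply₂₂, Matrix.smul_apply, Matrix.zero_apply, smul_zero,
      zero_add, Sum.elim_inr, Matrix.one_apply, smul_eq_mul]
    by_cases hxy : x = y <;> simp_all <;> push_cast <;> try ring

end RainsAux
namespace RainsAux

open Polynomial Matrix

variable {A : Type*} [Fintype A] [DecidableEq A]

lemma traceNorm_cdiag {n : Type*} [Fintype n] [DecidableEq n] (w : n → ℝ) :
    traceNorm (cdiag w) = ∑ i, |w i| := by
  have h := traceNorm_conj (one_mem_unitary (n := n)) w
  simpa using h

lemma posSemidef_cdiag {n : Type*} [Fintype n] [DecidableEq n] {w : n → ℝ}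
    (hw : ∀ i, 0 ≤ w i) : (cdiag w).PosSemidef := by
  rw [cdiag]
  refine Matrix.posSemidef_diagonal_iff.mpr fun i => ?_
  simpa using Complex.zero_le_real.mpr (hw i)

lemma pt_cdiag {B : Type*} [Fintype B] [DecidableEq B] (w : A × B → ℝ) :
    partialTranspose (cdiag w) = cdiag w := by
  ext ⟨x, b⟩ ⟨y, b'⟩
  simp only [partialTranspose, cdiag, Matrix.of_apply, Matrix.diagonal_apply, Prod.mk.injEq]
  by_cases h1 : x = y <;> by_cases h2 : b = b' <;> simp_all [eq_comm]

variable [Nonempty A]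

lemma card_posR : (0 : ℝ) < (Fintype.card A : ℝ) := by
  exact_mod_cast Fintype.card_pos

lemma dtau_nonneg {p : ℝ} (hp0 : 0 ≤ p) (hp1 : p ≤ 1) : ∀ i, 0 ≤ dtau A p i := by
  rintro ⟨x, b | u⟩ <;> simp only [dtau, Sum.elim_inl, Sum.elim_inr]
  · split_ifs
    · have := card_posR (A := A)
      have h1 : 0 ≤ 1 - p := by linarith
      positivity
    · exact le_refl 0
  · have := card_posR (A := A)
    positivity

lemma sum_dtau (p : ℝ) : ∑ i, dtau A p i = 1 := by
  rw [Fintype.sum_prod_type]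
  have hx : ∀ x : A, ∑ b : A ⊕ Unit, dtau A p (x, b) =
      (1 - p) / (Fintype.card A : ℝ) + p / (Fintype.card A : ℝ) := by
    intro x
    rw [Fintype.sum_sum_type]
    simp [dtau, Finset.sum_ite_eq]
  rw [Finset.sum_congr rfl (fun x _ => hx x), Finset.sum_const]
  have hd : ((Fintype.card A : ℝ)) ≠ 0 := ne_of_gt card_posR
  rw [Finset.card_univ, nsmul_eq_mul]
  field_simp
  ring

lemma part1 {p : ℝ} (hp0 : 0 ≤ p) (hp1 : p ≤ 1) :
    erasureTau A p ∈ PPTprime A (A ⊕ Unit) := by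
  rw [erasureTau_eq]
  constructor
  · exact posSemidef_cdiag (dtau_nonneg hp0 hp1)
  · rw [pt_cdiag, traceNorm_cdiag]
    have : ∑ i, |dtau A p i| = ∑ i, dtau A p i :=
      Finset.sum_congr rfl fun i _ => abs_of_nonneg (dtau_nonneg hp0 hp1 i)
    rw [this, sum_dtau]

end RainsAux
namespace RainsAux

open Polynomial Matrix

lemma conj_cancel {n : Type*} [Fintype n] [DecidableEq n] {V D E : Matrix n n ℂ}
    (hV : V ∈ Matrix.unitaryGroup n ℂ) (h : V * D * Vᴴ = V * E * Vᴴ) : D = E := by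
  obtain ⟨h1, h2⟩ := unitary_facts hV
  have key : ∀ D : Matrix n n ℂ, Vᴴ * (V * D * Vᴴ) * V = D := by
    intro D
    simp only [← Matrix.mul_assoc]
    rw [h1, Matrix.one_mul, Matrix.mul_assoc, h1, Matrix.mul_one]
  have := congrArg (fun X => Vᴴ * X * V) h
  simpa only [key] using this

lemma cdiag_smul {n : Type*} [Fintype n] [DecidableEq n] (r : ℝ) (w : n → ℝ) :
    cdiag (fun i => r * w i) = ((r : ℝ) : ℂ) • cdiag w := by
  ext i j
  by_cases h : i = j <;> simp [cdiag, Matrix.diagonal_apply, h]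

lemma smul_conj {n : Type*} [Fintype n] [DecidableEq n] (r : ℝ) (V : Matrix n n ℂ) (w : n → ℝ) :
    V * cdiag (fun i => r * w i) * Vᴴ = ((r : ℝ) : ℂ) • (V * cdiag w * Vᴴ) := by
  rw [cdiag_smul, Matrix.mul_smul, Matrix.smul_mul]

variable {A : Type*} [Fintype A] [DecidableEq A] [Nonempty A]

lemma cardC_ne_zero : ((Fintype.card A : ℂ)) ≠ 0 :=
  Nat.cast_ne_zero.mpr Fintype.card_ne_zero

lemma phi_herm : (maxEntIn A).IsHermitian := by
  ext ⟨x, a⟩ ⟨y, b⟩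
  simp only [Matrix.conjTranspose_apply, maxEntIn, Matrix.of_apply]
  by_cases h1 : y = b <;> by_cases h2 : x = a <;> simp [h1, h2, and_comm]

lemma phi_idem : maxEntIn A * maxEntIn A = maxEntIn A := by
  ext ⟨x, a⟩ ⟨y, b⟩
  simp only [Matrix.mul_apply, maxEntIn, Matrix.of_apply, Fintype.sum_prod_type]
  by_cases hxa : x = a <;> by_cases hyb : y = b <;>
    simp [hxa, hyb, Finset.sum_ite_eq, ite_and, mul_ite, ite_mul, Finset.sum_ite_eq',
      mul_inv_cancel₀ (cardC_ne_zero (A := A))]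
  try rw [Finset.sum_const, Finset.card_univ, nsmul_eq_mul,
    mul_inv_cancel_left₀ (cardC_ne_zero (A := A))]

lemma phi_trace : (maxEntIn A).trace = 1 := by
  simp only [Matrix.trace, Matrix.diag_apply, maxEntIn, Matrix.of_apply, Fintype.sum_prod_type]
  simp [Finset.sum_ite_eq, Finset.sum_const, Finset.card_univ, nsmul_eq_mul,
    mul_inv_cancel₀ (cardC_ne_zero (A := A))]

end RainsAux
namespace RainsAux

open Polynomial Matrix

variable {A : Type*} [Fintype A] [DecidableEq A] [Nonempty A]

lemma slice_trace (x y : A) :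
    (Matrix.of fun a a' => maxEntIn A (x, a) (y, a')).trace =
      if x = y then (Fintype.card A : ℂ)⁻¹ else 0 := by
  simp only [Matrix.trace, Matrix.diag_apply, Matrix.of_apply, maxEntIn]
  by_cases h : x = y
  · subst h
    simp [Finset.sum_ite_eq, ite_and]
  · rw [Finset.sum_eq_zero, if_neg h]
    intro a _
    rw [if_neg]
    rintro ⟨h1, h2⟩
    exact h (h1.trans h2.symm)

lemma rhoHat_eq (p : ℝ) :
    chanExt (erasureChannel p) (maxEntIn A) =
      (Matrix.fromBlocks (((1 - p : ℝ) : ℂ) • maxEntIn A) 0 0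
        (((p / (Fintype.card A : ℝ) : ℝ) : ℂ) • (1 : Matrix (A × Unit) (A × Unit) ℂ))).submatrix
        (Equiv.prodSumDistrib A A Unit) (Equiv.prodSumDistrib A A Unit) := by
  ext ⟨x, b⟩ ⟨y, b'⟩
  rcases b with a | u <;> rcases b' with a' | u' <;>
    simp only [chanExt, erasureChannel, Matrix.of_apply, Matrix.submatrix_apply,
      Equiv.coe_fn_mk, Equiv.prodSumDistrib_apply_left, Equiv.prodSumDistrib_apply_right,
      Matrix.fromBlocks_apply₁₁, Matrix.fromBlocks_apply₁₂, Matrix.fromBlocks_apply₂₁,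
      Matrix.fromBlocks_apply₂₂, Matrix.add_apply, Matrix.smul_apply, slice_trace,
      Matrix.zero_apply, smul_zero, add_zero, zero_add, smul_eq_mul]
  · -- inl/inl
    simp [maxEntIn, Matrix.of_apply]
    try (push_cast; ring)
  · ring
  · ring
  · -- inr/inr
    simp only [Matrix.one_apply, Prod.mk.injEq]
    by_cases h : x = y
    · subst h
      simp [Complex.ofReal_div]
      field_simp
    · simp [h]

end RainsAux
namespace RainsAux

open Polynomial Matrix

variable {A : Type*} [Fintype A] [DecidableEq A] [Nonempty A]

lemma part2 {p : ℝ} (hp0 : 0 ≤ p) (hp1 : p ≤ 1) :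
    relEntropy (chanExt (erasureChannel p) (maxEntIn A)) (erasureTau A p) =
      (1 - p) * Real.logb 2 (Fintype.card A) := by
  set d : ℝ := (Fintype.card A : ℝ) with hd
  have hdpos : 0 < d := card_posR
  have hΦ : (maxEntIn A).IsHermitian := phi_herm
  set U : Matrix (A × A) (A × A) ℂ := (hΦ.eigenvectorUnitary : Matrix (A × A) (A × A) ℂ) with hU
  have hUmem : U ∈ Matrix.unitaryGroup (A × A) ℂ := SetLike.coe_mem _
  set μ : A × A → ℝ := hΦ.eigenvalues with hμ
  have hspec : maxEntIn A = U * cdiag μ * Uᴴ := spectral' hΦ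
  have hμ01 : ∀ i, μ i = 0 ∨ μ i = 1 := by
    have h := phi_idem (A := A)
    rw [hspec, conj_mul_conj hUmem] at h
    have h2 := conj_cancel hUmem h
    rw [cdiag_mul_cdiag] at h2
    intro i
    have h3 := congrFun (congrFun h2 i) i
    simp only [cdiag, Matrix.diagonal_apply_eq, Complex.ofReal_inj] at h3
    have h4 : μ i * (μ i - 1) = 0 := by nlinarith [h3]
    rcases mul_eq_zero.mp h4 with h | h
    · exact Or.inl h
    · exact Or.inr (by linarith)
  have hμsum : ∑ i, μ i = 1 := by
    have h := re_trace_eq_sum_eigenvalues hΦ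
    rw [phi_trace] at h
    simpa using h.symm
  set a : A × A → ℝ := fun i => (1 - p) * μ i with ha
  set b : A × Unit → ℝ := fun _ => p / d with hb
  set e := Equiv.prodSumDistrib A A Unit with he
  obtain ⟨hWmem, hWconj⟩ := assemble e hUmem (one_mem_unitary (n := A × Unit)) a b
  have hblock1 : U * cdiag a * Uᴴ = ((1 - p : ℝ) : ℂ) • maxEntIn A := by
    rw [ha, smul_conj, ← hspec]
  have hblock2 : (1 : Matrix (A × Unit) (A × Unit) ℂ) * cdiag b *
      (1 : Matrix (A × Unit) (A × Unit) ℂ)ᴴ = ((p / d : ℝ) : ℂ) • 1 := by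
    rw [Matrix.conjTranspose_one, Matrix.one_mul, Matrix.mul_one]
    ext i j
    by_cases h : i = j <;> simp [cdiag, Matrix.diagonal_apply, Matrix.one_apply, h, hb]
  have hρ : chanExt (erasureChannel p) (maxEntIn A) =
      (Matrix.fromBlocks U 0 0 (1 : Matrix (A × Unit) (A × Unit) ℂ)).submatrix e e *
        cdiag (Sum.elim a b ∘ e) *
        ((Matrix.fromBlocks U 0 0 (1 : Matrix (A × Unit) (A × Unit) ℂ)).submatrix e e)ᴴ := by
    rw [hWconj, hblock1, hblock2, ← rhoHat_eq]
  rw [relEntropy_eq_sub, erasureTau_eq]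
  have t1 : ((chanExt (erasureChannel p) (maxEntIn A) *
      matFun (Real.logb 2) (chanExt (erasureChannel p) (maxEntIn A))).trace).re =
      ∑ i, (Sum.elim a b ∘ e) i * Real.logb 2 ((Sum.elim a b ∘ e) i) := by
    rw [hρ, matFun_conj _ hWmem, conj_mul_conj hWmem, cdiag_mul_cdiag, trace_conj hWmem,
      re_trace_cdiag]
  have t2 : ((chanExt (erasureChannel p) (maxEntIn A) *
      matFun (Real.logb 2) (cdiag (dtau A p))).trace).re =
      ∑ i, ((chanExt (erasureChannel p) (maxEntIn A)) i i).re * Real.logb 2 (dtau A p i) := by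
    rw [matFun_cdiag, re_trace_mul_cdiag]
  rw [t1, t2]
  have s1 : ∑ i, (Sum.elim a b ∘ e) i * Real.logb 2 ((Sum.elim a b ∘ e) i) =
      (1 - p) * Real.logb 2 (1 - p) + p * Real.logb 2 (p / d) := by
    rw [show (fun i => (Sum.elim a b ∘ e) i * Real.logb 2 ((Sum.elim a b ∘ e) i)) =
        (fun i => (fun j => Sum.elim a b j * Real.logb 2 (Sum.elim a b j)) (e i)) from rfl]
    rw [Equiv.sum_comp e (fun j => Sum.elim a b j * Real.logb 2 (Sum.elim a b j))]
    rw [Fintype.sum_sum_type]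
    simp only [Sum.elim_inl, Sum.elim_inr]
    have hsa : ∑ i : A × A, a i * Real.logb 2 (a i) = (1 - p) * Real.logb 2 (1 - p) := by
      have key : ∀ i, a i * Real.logb 2 (a i) = μ i * ((1 - p) * Real.logb 2 (1 - p)) := by
        intro i
        rcases hμ01 i with h | h <;> simp [ha, h]
      rw [Finset.sum_congr rfl fun i _ => key i, ← Finset.sum_mul, hμsum, one_mul]
    have hsb : ∑ _i : A × Unit, b _i * Real.logb 2 (b _i) = p * Real.logb 2 (p / d) := by
      simp only [hb]
      rw [Finset.sum_const, Finset.card_univ, Fintype.card_prod, Fintype.card_unit, mul_one,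
        nsmul_eq_mul]
      rw [show ((Fintype.card A : ℝ)) = d from rfl]
      field_simp
    rw [hsa, hsb]
  have s2 : ∑ i, ((chanExt (erasureChannel p) (maxEntIn A)) i i).re * Real.logb 2 (dtau A p i) =
      (1 - p) * Real.logb 2 ((1 - p) / d) + p * Real.logb 2 (p / d) := by
    rw [rhoHat_eq]
    rw [Fintype.sum_prod_type]
    have hin : ∀ x : A, ∑ bb : A ⊕ Unit,
        (((Matrix.fromBlocks (((1 - p : ℝ) : ℂ) • maxEntIn A) 0 0
          (((p / d : ℝ) : ℂ) • (1 : Matrix (A × Unit) (A × Unit) ℂ))).submatrix e e)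
            (x, bb) (x, bb)).re * Real.logb 2 (dtau A p (x, bb)) =
        ((1 - p) / d) * Real.logb 2 ((1 - p) / d) + (p / d) * Real.logb 2 (p / d) := by
      intro x
      rw [Fintype.sum_sum_type]
      have hterm : ∀ aa : A,
          (((Matrix.fromBlocks (((1 - p : ℝ) : ℂ) • maxEntIn A) 0 0
            (((p / d : ℝ) : ℂ) • (1 : Matrix (A × Unit) (A × Unit) ℂ))).submatrix e e)
              (x, Sum.inl aa) (x, Sum.inl aa)).re * Real.logb 2 (dtau A p (x, Sum.inl aa)) =
          if x = aa then ((1 - p) / d) * Real.logb 2 ((1 - p) / d) else 0 := by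
        intro aa
        simp only [Matrix.submatrix_apply, he, Equiv.prodSumDistrib_apply_left,
          Matrix.fromBlocks_apply₁₁, Matrix.smul_apply, maxEntIn, Matrix.of_apply,
          dtau, Sum.elim_inl]
        by_cases hxa : x = aa
        · subst hxa
          simp [smul_eq_mul, div_eq_mul_inv]
          try (push_cast; simp [Complex.mul_re])
          rfl
        · simp [hxa]
      rw [Finset.sum_congr rfl fun aa _ => hterm aa, Finset.sum_ite_eq]
      simp only [Finset.mem_univ, if_true]
      have : ∑ _u : Unit,
          (((Matrix.fromBlocks (((1 - p : ℝ) : ℂ) • maxEntIn A) 0 0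
            (((p / d : ℝ) : ℂ) • (1 : Matrix (A × Unit) (A × Unit) ℂ))).submatrix e e)
              (x, Sum.inr _u) (x, Sum.inr _u)).re * Real.logb 2 (dtau A p (x, Sum.inr _u)) =
          (p / d) * Real.logb 2 (p / d) := by
        simp [he, Matrix.fromBlocks_apply₂₂, Matrix.one_apply, dtau, Complex.mul_re]
        exact Or.inl rfl
      rw [this]
    rw [Finset.sum_congr rfl fun x _ => hin x, Finset.sum_const, Finset.card_univ, nsmul_eq_mul]
    rw [show ((Fintype.card A : ℝ)) = d from rfl]
    field_simp
    try ring
  rw [s1, s2]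
  by_cases hp : p = 1
  · subst hp
    simp
  · have h1p : (0 : ℝ) < 1 - p := lt_of_le_of_ne (by linarith) (by intro h; exact hp (by linarith))
    rw [Real.logb_div (ne_of_gt h1p) (ne_of_gt hdpos)]
    rw [show Real.logb 2 (Fintype.card A : ℝ) = Real.logb 2 d from rfl]
    ring

end RainsAux
namespace RainsAux

open Polynomial Matrix

variable {A : Type*} [Fintype A] [DecidableEq A] [Nonempty A]

/-- partial trace over the second factor, placed on `A × Unit` -/
def rhoR (ρ : Matrix (A × A) (A × A) ℂ) : Matrix (A × Unit) (A × Unit) ℂ :=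
  Matrix.of fun q r => ∑ aa : A, ρ (q.1, aa) (r.1, aa)

/-- isometry-like matrices realizing the partial trace as a sum of conjugations -/
def ptK (aa : A) : Matrix (A × Unit) (A × A) ℂ :=
  Matrix.of fun q s => if s = (q.1, aa) then 1 else 0

lemma rhoR_eq_sum (ρ : Matrix (A × A) (A × A) ℂ) :
    rhoR ρ = ∑ aa : A, ptK aa * ρ * (ptK aa)ᴴ := by
  ext q r
  rw [Matrix.sum_apply]
  simp only [rhoR, ptK, Matrix.mul_apply, Matrix.conjTranspose_apply, Matrix.of_apply]
  congr 1
  funext aa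
  simp [ite_mul, mul_ite, Finset.sum_ite_eq', apply_ite (star : ℂ → ℂ)]

lemma rhoR_psd {ρ : Matrix (A × A) (A × A) ℂ} (hρ : ρ.PosSemidef) : (rhoR ρ).PosSemidef := by
  rw [rhoR_eq_sum]
  have : ∀ aa : A, (ptK aa * ρ * (ptK aa)ᴴ).PosSemidef :=
    fun aa => hρ.mul_mul_conjTranspose_same (ptK aa)
  classical
  refine Finset.sum_induction _ _ (fun x y hx hy => hx.add hy) ?_ (fun aa _ => this aa)
  exact Matrix.PosSemidef.zero

lemma rhoR_trace (ρ : Matrix (A × A) (A × A) ℂ) : (rhoR ρ).trace = ρ.trace := by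
  simp only [Matrix.trace, Matrix.diag_apply, rhoR, Matrix.of_apply]
  rw [Fintype.sum_prod_type]
  simp only [Finset.univ_unique, Finset.sum_const, Finset.card_singleton, one_smul]
  exact (Fintype.sum_prod_type (f := fun p : A × A => ρ p p)).symm

lemma pt_herm {B : Type*} [Fintype B] [DecidableEq B] {ρ : Matrix (A × B) (A × B) ℂ}
    (hρ : ρ.IsHermitian) : (partialTranspose ρ).IsHermitian := by
  ext p q
  have h := fun u v => congrFun (congrFun hρ.eq u) v
  simp only [Matrix.conjTranspose_apply] at h ⊢
  simp only [partialTranspose, Matrix.of_apply]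
  rw [← h, star_star]

lemma pt_invol {B : Type*} (ρ : Matrix (A × B) (A × B) ℂ) :
    partialTranspose (partialTranspose ρ) = ρ := rfl

def swapEquiv (A : Type*) : ((A × A) × (A × A)) ≃ ((A × A) × (A × A)) :=
  ⟨fun pq => ((pq.1.1, pq.2.2), (pq.2.1, pq.1.2)),
   fun pq => ((pq.1.1, pq.2.2), (pq.2.1, pq.1.2)), fun _ => rfl, fun _ => rfl⟩

lemma trace_pt_sq (ρ : Matrix (A × A) (A × A) ℂ) :
    (partialTranspose ρ * partialTranspose ρ).trace = (ρ * ρ).trace := by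
  have hform : ∀ M : Matrix (A × A) (A × A) ℂ, (M * M).trace =
      ∑ pq : (A × A) × (A × A), M pq.1 pq.2 * M pq.2 pq.1 := by
    intro M
    simp only [Matrix.trace, Matrix.diag_apply, Matrix.mul_apply]
    exact (Fintype.sum_prod_type
      (f := fun pq : (A × A) × (A × A) => M pq.1 pq.2 * M pq.2 pq.1)).symm
  rw [hform, hform]
  exact Fintype.sum_equiv (swapEquiv A) _ _ (fun pq => rfl)

lemma pt_trace (ρ : Matrix (A × A) (A × A) ℂ) : (partialTranspose ρ).trace = ρ.trace := by
  simp only [Matrix.trace, Matrix.diag_apply, partialTranspose, Matrix.of_apply]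

lemma chanExt_erasure (p : ℝ) (ρ : Matrix (A × A) (A × A) ℂ) :
    chanExt (erasureChannel p) ρ =
      (Matrix.fromBlocks (((1 - p : ℝ) : ℂ) • ρ) 0 0 (((p : ℝ) : ℂ) • rhoR ρ)).submatrix
        (Equiv.prodSumDistrib A A Unit) (Equiv.prodSumDistrib A A Unit) := by
  ext ⟨x, b⟩ ⟨y, b'⟩
  rcases b with a | u <;> rcases b' with a' | u' <;>
    simp only [chanExt, erasureChannel, Matrix.of_apply, Matrix.submatrix_apply,
      Equiv.prodSumDistrib_apply_left, Equiv.prodSumDistrib_apply_right,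
      Matrix.fromBlocks_apply₁₁, Matrix.fromBlocks_apply₁₂, Matrix.fromBlocks_apply₂₁,
      Matrix.fromBlocks_apply₂₂, Matrix.add_apply, Matrix.smul_apply,
      Matrix.zero_apply, smul_zero, add_zero, zero_add, smul_eq_mul]
  · push_cast; ring
  · ring
  · ring
  · simp only [rhoR, Matrix.trace, Matrix.diag_apply, Matrix.of_apply, Matrix.one_apply,
      eq_iff_true_of_subsingleton, if_true]
    push_cast
    ring

lemma pt_blocks (s₁ s₂ : ℂ) (ρ : Matrix (A × A) (A × A) ℂ) :
    partialTranspose ((Matrix.fromBlocks (s₁ • ρ) 0 0 (s₂ • rhoR ρ)).submatrix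
        (Equiv.prodSumDistrib A A Unit) (Equiv.prodSumDistrib A A Unit)) =
      (Matrix.fromBlocks (s₁ • partialTranspose ρ) 0 0 (s₂ • rhoR ρ)).submatrix
        (Equiv.prodSumDistrib A A Unit) (Equiv.prodSumDistrib A A Unit) := by
  ext ⟨x, b⟩ ⟨y, b'⟩
  rcases b with a | u <;> rcases b' with a' | u' <;>
    simp [partialTranspose, Matrix.submatrix_apply, Equiv.prodSumDistrib_apply_left,
      Equiv.prodSumDistrib_apply_right, rhoR]

end RainsAux
namespace RainsAux

open Polynomial Matrix

variable {A : Type*} [Fintype A] [DecidableEq A] [Nonempty A]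

lemma part3core {p : ℝ} (hp0 : 0 ≤ p) (hp1 : p ≤ 1) (ρ : Matrix (A × A) (A × A) ℂ)
    (hρ : IsDensity ρ) :
    ∃ τ ∈ PPTprime A (A ⊕ Unit),
      relEntropy (chanExt (erasureChannel p) ρ) τ ≤
        (1 - p) * Real.logb 2 (Fintype.card A) := by
  set d : ℝ := (Fintype.card A : ℝ) with hd
  have hdpos : 0 < d := card_posR
  have hd1 : (1 : ℝ) ≤ d := by
    rw [hd]; exact_mod_cast Fintype.card_pos
  obtain ⟨hPSD, htr⟩ := hρ
  have hH : ρ.IsHermitian := hPSD.1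
  have hU1mem : (hH.eigenvectorUnitary : Matrix (A × A) (A × A) ℂ) ∈
      Matrix.unitaryGroup (A × A) ℂ := SetLike.coe_mem _
  set lam : A × A → ℝ := hH.eigenvalues with hlam
  have hspec1 : ρ = (hH.eigenvectorUnitary : Matrix (A × A) (A × A) ℂ) * cdiag lam *
      (hH.eigenvectorUnitary : Matrix (A × A) (A × A) ℂ)ᴴ := spectral' hH
  have hlam0 : ∀ i, 0 ≤ lam i := hPSD.eigenvalues_nonneg
  have hlamsum : ∑ i, lam i = 1 := by
    have h := re_trace_eq_sum_eigenvalues hH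
    rw [htr] at h
    simpa using h.symm
  have hRpsd : (rhoR ρ).PosSemidef := rhoR_psd hPSD
  have hRH : (rhoR ρ).IsHermitian := hRpsd.1
  have hU2mem : (hRH.eigenvectorUnitary : Matrix (A × Unit) (A × Unit) ℂ) ∈
      Matrix.unitaryGroup (A × Unit) ℂ := SetLike.coe_mem _
  set mu : A × Unit → ℝ := hRH.eigenvalues with hmu
  have hspec2 : rhoR ρ = (hRH.eigenvectorUnitary : Matrix (A × Unit) (A × Unit) ℂ) * cdiag mu *
      (hRH.eigenvectorUnitary : Matrix (A × Unit) (A × Unit) ℂ)ᴴ := spectral' hRH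
  have hmu0 : ∀ i, 0 ≤ mu i := hRpsd.eigenvalues_nonneg
  have hmusum : ∑ i, mu i = 1 := by
    have h := re_trace_eq_sum_eigenvalues hRH
    rw [rhoR_trace, htr] at h
    simpa using h.symm
  have hGH : (partialTranspose ρ).IsHermitian := pt_herm hH
  have hU3mem : (hGH.eigenvectorUnitary : Matrix (A × A) (A × A) ℂ) ∈
      Matrix.unitaryGroup (A × A) ℂ := SetLike.coe_mem _
  set gam : A × A → ℝ := hGH.eigenvalues with hgam
  have hspec3 : partialTranspose ρ =
      (hGH.eigenvectorUnitary : Matrix (A × A) (A × A) ℂ) * cdiag gam *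
      (hGH.eigenvectorUnitary : Matrix (A × A) (A × A) ℂ)ᴴ := spectral' hGH
  have hgamsum : ∑ i, gam i = 1 := by
    have h := re_trace_eq_sum_eigenvalues hGH
    rw [pt_trace, htr] at h
    simpa using h.symm
  set c : ℝ := ∑ i, |gam i| with hc
  have hc1 : 1 ≤ c := by
    rw [hc, ← hgamsum]
    exact Finset.sum_le_sum fun i _ => le_abs_self _
  have hc0 : 0 < c := lt_of_lt_of_le one_pos hc1
  -- c ≤ d
  have hsq_eq : ∑ i, gam i * gam i = ∑ i, lam i * lam i := by
    have h1 : ((partialTranspose ρ * partialTranspose ρ).trace).re = ∑ i, gam i * gam i := by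
      conv_lhs => rw [hspec3]
      rw [conj_mul_conj hU3mem, cdiag_mul_cdiag, trace_conj hU3mem, re_trace_cdiag]
    have h2 : ((ρ * ρ).trace).re = ∑ i, lam i * lam i := by
      conv_lhs => rw [hspec1]
      rw [conj_mul_conj hU1mem, cdiag_mul_cdiag, trace_conj hU1mem, re_trace_cdiag]
    rw [← h1, ← h2, trace_pt_sq]
  have hlam2 : ∑ i, lam i * lam i ≤ 1 := by
    have h := Finset.sum_sq_le_sq_sum_of_nonneg (s := Finset.univ)
      (f := lam) (fun i _ => hlam0 i)
    rw [hlamsum] at h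
    simpa [sq] using h
  have hcd : c ≤ d := by
    have hcs := Finset.sum_mul_sq_le_sq_mul_sq Finset.univ (fun _ : A × A => (1 : ℝ))
      (fun i => |gam i|)
    simp only [one_mul, one_pow, Finset.sum_const, Finset.card_univ, nsmul_eq_mul,
      mul_one] at hcs
    have hcard : (Fintype.card (A × A) : ℝ) = d * d := by
      rw [Fintype.card_prod]; push_cast; ring
    rw [hcard] at hcs
    have h2 : (∑ i, |gam i|) ^ 2 ≤ d * d := by
      calc (∑ i, |gam i|) ^ 2 ≤ d * d * ∑ i, |gam i| ^ 2 := hcs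
        _ ≤ d * d * 1 := by
            refine mul_le_mul_of_nonneg_left ?_ (by positivity)
            calc ∑ i, |gam i| ^ 2 = ∑ i, gam i * gam i := by
                  refine Finset.sum_congr rfl fun i _ => ?_
                  rw [sq_abs, sq]
              _ ≤ 1 := hsq_eq ▸ hlam2
        _ = d * d := by ring
    nlinarith [hc0, hdpos]
  -- the witness
  set s₁ : ℝ := (1 - p) / c with hs₁
  have hs₁0 : 0 ≤ s₁ := div_nonneg (by linarith) (le_of_lt hc0)
  set e := Equiv.prodSumDistrib A A Unit with he
  set τ : Matrix (A × (A ⊕ Unit)) (A × (A ⊕ Unit)) ℂ :=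
    (Matrix.fromBlocks (((s₁ : ℝ) : ℂ) • ρ) 0 0 (((p : ℝ) : ℂ) • rhoR ρ)).submatrix e e with hτ
  obtain ⟨hWmem, hWconj⟩ := assemble e hU1mem hU2mem (fun i => s₁ * lam i) (fun j => p * mu j)
  have hblockA : (hH.eigenvectorUnitary : Matrix (A × A) (A × A) ℂ) *
      cdiag (fun i => s₁ * lam i) * (hH.eigenvectorUnitary : Matrix (A × A) (A × A) ℂ)ᴴ =
      ((s₁ : ℝ) : ℂ) • ρ := by rw [smul_conj, ← hspec1]
  have hblockB : (hRH.eigenvectorUnitary : Matrix (A × Unit) (A × Unit) ℂ) *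
      cdiag (fun j => p * mu j) * (hRH.eigenvectorUnitary : Matrix (A × Unit) (A × Unit) ℂ)ᴴ =
      ((p : ℝ) : ℂ) • rhoR ρ := by rw [smul_conj, ← hspec2]
  rw [hblockA, hblockB] at hWconj
  -- positivity of τ
  have hτpsd : τ.PosSemidef := by
    rw [hτ, ← hWconj]
    refine posSemidef_conj hWmem ?_
    intro i
    rcases h : e i with j | j
    · simp only [Function.comp_apply, h, Sum.elim_inl]
      exact mul_nonneg hs₁0 (hlam0 j)
    · simp only [Function.comp_apply, h, Sum.elim_inr]
      exact mul_nonneg hp0 (hmu0 j)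
  -- trace norm of partial transpose
  obtain ⟨hW'mem, hW'conj⟩ := assemble e hU3mem hU2mem (fun i => s₁ * gam i) (fun j => p * mu j)
  have hblockA' : (hGH.eigenvectorUnitary : Matrix (A × A) (A × A) ℂ) *
      cdiag (fun i => s₁ * gam i) * (hGH.eigenvectorUnitary : Matrix (A × A) (A × A) ℂ)ᴴ =
      ((s₁ : ℝ) : ℂ) • partialTranspose ρ := by rw [smul_conj, ← hspec3]
  rw [hblockA', hblockB] at hW'conj
  have hτpt : traceNorm (partialTranspose τ) = 1 := by
    rw [hτ, pt_blocks, ← hW'conj, traceNorm_conj hW'mem]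
    rw [show (fun i => |(Sum.elim (fun i => s₁ * gam i) (fun j => p * mu j) ∘ e) i|) =
        (fun i => (fun j => |Sum.elim (fun i => s₁ * gam i) (fun j => p * mu j) j|) (e i))
        from rfl]
    rw [Equiv.sum_comp e (fun j => |Sum.elim (fun i => s₁ * gam i) (fun j => p * mu j) j|)]
    rw [Fintype.sum_sum_type]
    simp only [Sum.elim_inl, Sum.elim_inr]
    have ha : ∑ i : A × A, |s₁ * gam i| = s₁ * c := by
      rw [hc, Finset.mul_sum]
      exact Finset.sum_congr rfl fun i _ => by rw [abs_mul, abs_of_nonneg hs₁0]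
    have hb : ∑ j : A × Unit, |p * mu j| = p := by
      have : ∀ j, |p * mu j| = p * mu j :=
        fun j => abs_of_nonneg (mul_nonneg hp0 (hmu0 j))
      rw [Finset.sum_congr rfl fun j _ => this j, ← Finset.mul_sum, hmusum, mul_one]
    rw [ha, hb, hs₁, div_mul_cancel₀ _ (ne_of_gt hc0)]
    ring
  -- relative entropy bound
  obtain ⟨hWmem2, hWconj2⟩ := assemble e hU1mem hU2mem (fun i => (1 - p) * lam i)
    (fun j => p * mu j)
  have hblockA2 : (hH.eigenvectorUnitary : Matrix (A × A) (A × A) ℂ) *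
      cdiag (fun i => (1 - p) * lam i) * (hH.eigenvectorUnitary : Matrix (A × A) (A × A) ℂ)ᴴ =
      ((1 - p : ℝ) : ℂ) • ρ := by rw [smul_conj, ← hspec1]
  rw [hblockA2, hblockB] at hWconj2
  have hrel : relEntropy (chanExt (erasureChannel p) ρ) τ ≤
      (1 - p) * Real.logb 2 d := by
    rw [chanExt_erasure, ← he, ← hWconj2, hτ, ← hWconj, relEntropy_conj hWmem]
    rw [show (fun i => (Sum.elim (fun i => (1 - p) * lam i) (fun j => p * mu j) ∘ e) i *
        (Real.logb 2 ((Sum.elim (fun i => (1 - p) * lam i) (fun j => p * mu j) ∘ e) i) -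
         Real.logb 2 ((Sum.elim (fun i => s₁ * lam i) (fun j => p * mu j) ∘ e) i))) =
        (fun i => (fun j => Sum.elim (fun i => (1 - p) * lam i) (fun j => p * mu j) j *
        (Real.logb 2 (Sum.elim (fun i => (1 - p) * lam i) (fun j => p * mu j) j) -
         Real.logb 2 (Sum.elim (fun i => s₁ * lam i) (fun j => p * mu j) j))) (e i)) from rfl]
    rw [Equiv.sum_comp e (fun j => Sum.elim (fun i => (1 - p) * lam i) (fun j => p * mu j) j *
        (Real.logb 2 (Sum.elim (fun i => (1 - p) * lam i) (fun j => p * mu j) j) -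
         Real.logb 2 (Sum.elim (fun i => s₁ * lam i) (fun j => p * mu j) j)))]
    rw [Fintype.sum_sum_type]
    simp only [Sum.elim_inl, Sum.elim_inr, sub_self, mul_zero, Finset.sum_const_zero, add_zero]
    have key : ∀ i : A × A, (1 - p) * lam i *
        (Real.logb 2 ((1 - p) * lam i) - Real.logb 2 (s₁ * lam i)) ≤
        (1 - p) * lam i * Real.logb 2 d := by
      intro i
      rcases eq_or_lt_of_le (mul_nonneg (by linarith : (0:ℝ) ≤ 1 - p) (hlam0 i)) with h0 | hpos
      · rw [← h0]
        simp
      · have hs : s₁ * lam i = ((1 - p) * lam i) / c := by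
          rw [hs₁]; ring
        rw [hs, Real.logb_div (ne_of_gt hpos) (ne_of_gt hc0)]
        have hlogb : Real.logb 2 c ≤ Real.logb 2 d :=
          (Real.logb_le_logb (by norm_num) hc0 (lt_of_lt_of_le hc0 hcd)).mpr hcd
        calc (1 - p) * lam i * (Real.logb 2 ((1 - p) * lam i) -
              (Real.logb 2 ((1 - p) * lam i) - Real.logb 2 c)) =
              (1 - p) * lam i * Real.logb 2 c := by ring
          _ ≤ (1 - p) * lam i * Real.logb 2 d :=
              mul_le_mul_of_nonneg_left hlogb (le_of_lt hpos)
    calc ∑ i : A × A, (1 - p) * lam i *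
          (Real.logb 2 ((1 - p) * lam i) - Real.logb 2 (s₁ * lam i)) ≤
          ∑ i : A × A, (1 - p) * lam i * Real.logb 2 d :=
          Finset.sum_le_sum fun i _ => key i
      _ = (1 - p) * Real.logb 2 d := by
          rw [show (fun i : A × A => (1 - p) * lam i * Real.logb 2 d) =
              (fun i : A × A => ((1 - p) * Real.logb 2 d) * lam i) from funext fun i => by ring]
          rw [← Finset.mul_sum, hlamsum, mul_one]
  exact ⟨τ, ⟨hτpsd, le_of_eq hτpt⟩, hrel⟩

end RainsAux
/-- Rains information upper bound for the qudit erasure channel. -/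
theorem rains_erasure {A : Type*} [Fintype A] [DecidableEq A] [Nonempty A]
    (p : ℝ) (hp0 : 0 ≤ p) (hp1 : p ≤ 1) :
    erasureTau A p ∈ PPTprime A (A ⊕ Unit) ∧
    relEntropy (chanExt (erasureChannel p) (maxEntIn A)) (erasureTau A p) =
      (1 - p) * Real.logb 2 (Fintype.card A) ∧
    RainsChan (erasureChannel (A := A) p) ≤ (1 - p) * Real.logb 2 (Fintype.card A) := by
  refine ⟨RainsAux.part1 hp0 hp1, RainsAux.part2 hp0 hp1, ?_⟩
  have hbound0 : 0 ≤ (1 - p) * Real.logb 2 (Fintype.card A) :=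
    mul_nonneg (by linarith)
      (Real.logb_nonneg (by norm_num) (Nat.one_le_cast.mpr Fintype.card_pos))
  rw [RainsChan]
  refine Real.iSup_le (fun ρ => ?_) hbound0
  obtain ⟨τ, hmem, hle⟩ := RainsAux.part3core hp0 hp1 ρ.1 ρ.2
  by_cases hbb : BddBelow (Set.range (fun τ : (PPTprime A (A ⊕ Unit)) =>
      relEntropy (chanExt (erasureChannel p) ρ.1) τ.1))
  · exact le_trans (ciInf_le hbb (⟨τ, hmem⟩ : (PPTprime A (A ⊕ Unit)))) hle
  · rw [Real.iInf_of_not_bddBelow hbb]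
    exact hbound0
end
end
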